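/- arXiv:1207.1838 — 3 statements merged into one kernel-verified Lean document; each statement's English description precedes it below -/
import Mathlib

section
/- If n is odd and M is a set of at most (n−1)/2 edges of the complete graph K_n, then K_n \ M contains (n−1)/2 pairwise edge-disjoint spanning trees. -/
open SimpleGraph
open scoped Classical

/-- An `S`-Steiner tree in `G`: a subgraph of `G` which is a tree and contains `S`. -/
def IsSteinerTree {V : Type*} (G : SimpleGraph V) (S : Set V) (T : G.Subgraph) : Prop :=
  S ⊆ T.verts ∧ T.coe.IsTree

/-- The generalized local connectivity `κ_G(S)`: the maximum number of pairwise
internally disjoint `S`-Steiner trees in `G`. -/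
noncomputable def steinerKappa {V : Type*} (G : SimpleGraph V) (S : Set V) : ℕ :=
  sSup {n | ∃ T : Fin n → G.Subgraph, (∀ i, IsSteinerTree G S (T i)) ∧
    ∀ i j, i ≠ j → (T i).edgeSet ∩ (T j).edgeSet = ∅ ∧ (T i).verts ∩ (T j).verts = S}

/-- The generalized local edge-connectivity `λ_G(S)`: the maximum number of pairwise
edge-disjoint `S`-Steiner trees in `G`. -/
noncomputable def steinerLambda {V : Type*} (G : SimpleGraph V) (S : Set V) : ℕ :=
  sSup {n | ∃ T : Fin n → G.Subgraph, (∀ i, IsSteinerTree G S (T i)) ∧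
    ∀ i j, i ≠ j → (T i).edgeSet ∩ (T j).edgeSet = ∅}

/-- The generalized `k`-connectivity `κ_k(G)` (with the convention that it is `0`
for a disconnected graph). -/
noncomputable def genKappa {V : Type*} [Fintype V] (G : SimpleGraph V) (k : ℕ) : ℕ :=
  if G.Connected then sInf {m | ∃ S : Finset V, S.card = k ∧ steinerKappa G ↑S = m} else 0

/-- The generalized `k`-edge-connectivity `λ_k(G)` (with the convention that it is `0`
for a disconnected graph). -/
noncomputable def genLambda {V : Type*} [Fintype V] (G : SimpleGraph V) (k : ℕ) : ℕ :=
  if G.Connected then sInf {m | ∃ S : Finset V, S.card = k ∧ steinerLambda G ↑S = m} else 0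

/-- The edge-connectivity `λ(G)`: the minimum number of edges whose removal disconnects `G`. -/
noncomputable def edgeConn {V : Type*} [Fintype V] (G : SimpleGraph V) : ℕ :=
  sInf {m | ∃ F : Set (Sym2 V), F ⊆ G.edgeSet ∧ F.ncard = m ∧ ¬ (G.deleteEdges F).Connected}

/-- The vertex connectivity `κ(G)`: the minimum size of a vertex set whose removal
disconnects `G` or leaves at most one vertex. -/
noncomputable def vertexConn {V : Type*} [Fintype V] (G : SimpleGraph V) : ℕ :=
  sInf {m | ∃ S : Finset V, S.card = m ∧
    (¬ (G.induce ((↑S : Set V)ᶜ)).Connected ∨ Fintype.card V ≤ m + 1)}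

variable {V : Type*}

/-- The graph given by a parent function `p` with root `r`. -/
def ptg (r : V) (p : V → V) : SimpleGraph V where
  Adj a b := a ≠ b ∧ ((a ≠ r ∧ p a = b) ∨ (b ≠ r ∧ p b = a))
  symm := by
    constructor
    rintro a b ⟨hab, h⟩
    exact ⟨hab.symm, h.symm⟩
  loopless := ⟨fun a h => h.1 rfl⟩

lemma ptg_adj {r : V} {p : V → V} {a b : V} :
    (ptg r p).Adj a b ↔ a ≠ b ∧ ((a ≠ r ∧ p a = b) ∨ (b ≠ r ∧ p b = a)) := Iff.rfl

lemma ptg_edgeSet {r : V} {p : V → V} {e : Sym2 V} :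
    e ∈ (ptg r p).edgeSet ↔ ∃ v, v ≠ r ∧ v ≠ p v ∧ e = s(v, p v) := by
  induction e using Sym2.ind with
  | _ a b =>
    rw [mem_edgeSet, ptg_adj]
    constructor
    · rintro ⟨hab, (⟨har, hpa⟩ | ⟨hbr, hpb⟩)⟩
      · exact ⟨a, har, by rw [hpa]; exact hab, by rw [hpa]⟩
      · exact ⟨b, hbr, by rw [hpb]; exact hab.symm, by rw [hpb, Sym2.eq_swap]⟩
    · rintro ⟨v, hvr, hvp, he⟩
      rw [Sym2.eq_iff] at he
      rcases he with ⟨rfl, rfl⟩ | ⟨rfl, rfl⟩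
      · exact ⟨hvp, Or.inl ⟨hvr, rfl⟩⟩
      · exact ⟨Ne.symm hvp, Or.inr ⟨hvr, rfl⟩⟩

lemma ptg_connected (r : V) (p : V → V) (h : V → ℕ)
    (hd : ∀ v, v ≠ r → h (p v) < h v) : (ptg r p).Connected := by
  have hne : Nonempty V := ⟨r⟩
  have reach : ∀ n v, h v ≤ n → (ptg r p).Reachable v r := by
    intro n
    induction n with
    | zero =>
      intro v hv
      by_cases hvr : v = r
      · subst hvr; rfl
      · exact absurd (lt_of_lt_of_le (hd v hvr) hv) (Nat.not_lt_zero _)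
    | succ n ih =>
      intro v hv
      by_cases hvr : v = r
      · subst hvr; rfl
      · have hlt := hd v hvr
        have hadj : (ptg r p).Adj v (p v) :=
          ⟨fun hh => by rw [← hh] at hlt; exact lt_irrefl _ hlt, Or.inl ⟨hvr, rfl⟩⟩
        exact hadj.reachable.trans (ih (p v) (by omega))
  exact Connected.mk (fun a b => (reach (h a) a le_rfl).trans (reach (h b) b le_rfl).symm)

/-- The key step: if adjacent to `u` and not higher than `u`, must be the parent of `u`. -/
lemma ptg_parent_of_adj {r : V} {p : V → V} {h : V → ℕ}
    (hd : ∀ v, v ≠ r → h (p v) < h v) {u y : V}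
    (hadj : (ptg r p).Adj u y) (hy : h y ≤ h u) : u ≠ r ∧ p u = y := by
  rcases hadj with ⟨huy, (hl | ⟨hyr, hpy⟩)⟩
  · exact hl
  · exfalso
    have := hd y hyr
    rw [hpy] at this
    omega

lemma ptg_isTree (r : V) (p : V → V) (h : V → ℕ)
    (hd : ∀ v, v ≠ r → h (p v) < h v) : (ptg r p).IsTree := by
  refine ⟨ptg_connected r p h hd, ?_⟩
  intro v c0 hc0
  -- pick a support vertex of maximal height
  obtain ⟨u, hu, humax⟩ : ∃ u ∈ c0.support, ∀ y ∈ c0.support, h y ≤ h u := by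
    obtain ⟨u, hu1, hu2⟩ := Finset.exists_max_image c0.support.toFinset h
      ⟨v, by simp [Walk.start_mem_support]⟩
    exact ⟨u, by simpa using hu1, fun y hy => hu2 y (by simpa using hy)⟩
  have hsupp : ∀ y ∈ (c0.rotate u hu).support, y ∈ c0.support := by
    intro y hy
    rcases (Walk.mem_support_iff _).mp hy with rfl | hy'
    · exact hu
    · have := (Walk.support_rotate c0 u hu).mem_iff.mp hy'
      exact List.mem_of_mem_tail this
  generalize hcdef : c0.rotate u hu = c at *
  have hc : c.IsCycle := hcdef ▸ hc0.rotate hu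
  clear hcdef hc0
  have hlen3 := hc.three_le_length
  -- decompose the cycle
  cases c with
  | nil => exact hc.ne_nil rfl
  | cons hadj q =>
    rename_i v1
    rw [Walk.cons_isCycle_iff] at hc
    obtain ⟨hq, he⟩ := hc
    have hv1 : v1 ∈ (Walk.cons hadj q).support := by
      simp [Walk.support_cons, Walk.start_mem_support]
    -- decompose the reverse of q
    rw [Walk.length_cons] at hlen3
    cases hrev : q.reverse with
    | nil =>
      have : q.length = 0 := by
        have := congrArg Walk.length hrev
        simpa using this
      omega
    | cons hadj2 q2 =>
      rename_i y
      have hyedge : s(u, y) ∈ q.edges := by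
        have : s(u, y) ∈ q.reverse.edges := by rw [hrev]; simp [Walk.edges_cons]
        rwa [Walk.edges_reverse, List.mem_reverse] at this
      have hysupp : y ∈ q.support := by
        have : y ∈ q.reverse.support := by rw [hrev]; simp [Walk.support_cons]
        rwa [Walk.support_reverse, List.mem_reverse] at this
      have hy_in : y ∈ (Walk.cons hadj q).support := by
        rw [Walk.support_cons]; exact List.mem_cons_of_mem _ hysupp
      have h1 := ptg_parent_of_adj hd hadj (humax v1 (hsupp _ hv1))
      have h2 := ptg_parent_of_adj hd hadj2 (humax y (hsupp _ hy_in))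
      have : y = v1 := by rw [← h1.2, h2.2]
      subst this
      exact he hyedge

/-- Parent data for `k` edge-disjoint spanning trees avoiding `M`. -/
def Good (M : Set (Sym2 V)) (k : ℕ) : Prop :=
  ∃ (r : Fin k → V) (p : Fin k → V → V) (h : Fin k → V → ℕ),
    (∀ i v, v ≠ r i → h i (p i v) < h i v) ∧
    (∀ i v, v ≠ r i → s(v, p i v) ∉ M) ∧
    (∀ i j v u, i ≠ j → v ≠ r i → u ≠ r j → s(v, p i v) ≠ s(u, p j u))

lemma good_to_subgraphs (M : Set (Sym2 V)) (k : ℕ) (hg : Good M k) :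
    ∃ T : Fin k → ((⊤ : SimpleGraph V).deleteEdges M).Subgraph,
      (∀ i, (T i).IsSpanning ∧ (T i).coe.IsTree) ∧
      ∀ i j, i ≠ j → (T i).edgeSet ∩ (T j).edgeSet = ∅ := by
  obtain ⟨r, p, h, hd, hM, hdisj⟩ := hg
  have hwit : ∀ i a b, (ptg (r i) (p i)).Adj a b →
      ∃ v, v ≠ r i ∧ s(a, b) = s(v, p i v) := by
    intro i a b hab
    rw [ptg_adj] at hab
    rcases hab with ⟨hne, (⟨har, hpa⟩ | ⟨hbr, hpb⟩)⟩
    · exact ⟨a, har, by rw [hpa]⟩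
    · exact ⟨b, hbr, by rw [hpb, Sym2.eq_swap]⟩
  have hle : ∀ i a b, (ptg (r i) (p i)).Adj a b →
      ((⊤ : SimpleGraph V).deleteEdges M).Adj a b := by
    intro i a b hab
    obtain ⟨v, hvr, hv⟩ := hwit i a b hab
    rw [deleteEdges_adj]
    exact ⟨by simpa using hab.ne, by rw [hv]; exact hM i v hvr⟩
  refine ⟨fun i => ⟨Set.univ, (ptg (r i) (p i)).Adj, fun {a b} hab => hle i a b hab,
    fun {a b} _ => trivial, ⟨fun a b hab => hab.symm⟩⟩, fun i => ⟨fun v => trivial, ?_⟩, ?_⟩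
  · -- coe is a tree
    have hco : (Subgraph.mk (G := (⊤ : SimpleGraph V).deleteEdges M)
        Set.univ (ptg (r i) (p i)).Adj (fun {a b} hab => hle i a b hab)
        (fun {a b} _ => trivial) ⟨fun a b hab => hab.symm⟩).coe
        = ptg (⟨r i, trivial⟩ : (Set.univ : Set V))
            (fun x => (⟨p i x.1, trivial⟩ : (Set.univ : Set V))) := by
      ext ⟨a, _⟩ ⟨b, _⟩
      simp only [Subgraph.coe_adj, ptg_adj, Ne, Subtype.ext_iff]
    rw [hco]
    exact ptg_isTree _ _ (fun x => h i x.1)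
      (fun x hx => hd i x.1 (fun hh => hx (Subtype.ext hh)))
  · -- edge disjointness
    intro i j hij
    ext e
    simp only [Set.mem_inter_iff, Set.mem_empty_iff_false, iff_false, not_and]
    induction e using Sym2.ind with
    | _ a b =>
      intro hi hj
      rw [Subgraph.mem_edgeSet] at hi hj
      obtain ⟨v, hvr, hv⟩ := hwit i a b hi
      obtain ⟨u, hur, hu⟩ := hwit j a b hj
      exact hdisj i j v u hij hvr hur (by rw [← hv, ← hu])

lemma ncard_covered_le (S : Set (Sym2 V)) (hS : S.Finite) :
    {v | ∃ e ∈ S, v ∈ e}.ncard ≤ 2 * S.ncard := by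
  refine Set.Finite.induction_on _ hS (by simp) (fun {e S} heS hSfin ih => ?_)
  have hsplit : {v | ∃ e' ∈ insert e S, v ∈ e'} =
      {v | v ∈ e} ∪ {v | ∃ e' ∈ S, v ∈ e'} := by
    ext v; simp [or_and_right, exists_or]
  have h2 : {v | v ∈ e}.ncard ≤ 2 := by
    induction e using Sym2.ind with
    | _ a b =>
      have : {v | v ∈ s(a, b)} = {a, b} := by ext v; simp [Sym2.mem_iff]
      rw [this]
      exact le_trans (Set.ncard_insert_le a {b}) (by simp)
  calc {v | ∃ e' ∈ insert e S, v ∈ e'}.ncard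
      ≤ {v | v ∈ e}.ncard + {v | ∃ e' ∈ S, v ∈ e'}.ncard := by
        rw [hsplit]; exact Set.ncard_union_le _ _
    _ ≤ 2 + 2 * S.ncard := by omega
    _ ≤ 2 * (insert e S).ncard := by
        rw [Set.ncard_insert_of_notMem heS hSfin]; omega


lemma subtype_card_eq {w x : V} [Fintype V] (hwx : w ≠ x) :
    Fintype.card {u : V // u ≠ w ∧ u ≠ x} = Fintype.card V - 2 := by
  rw [Fintype.card_subtype]
  have h1 : (Finset.univ.filter (fun u : V => u ≠ w ∧ u ≠ x)) =
      Finset.univ \ {w, x} := by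
    ext u
    simp only [Finset.mem_filter, Finset.mem_univ, true_and, Finset.mem_sdiff,
      Finset.mem_insert, Finset.mem_singleton]
    tauto
  rw [h1, Finset.card_sdiff_of_subset (by simp)]
  simp [Finset.card_insert_of_notMem, hwx]

theorem key (k : ℕ) : ∀ (V : Type) [Fintype V], Fintype.card V = 2 * k + 1 →
    ∀ M : Set (Sym2 V), (∀ e ∈ M, ¬ e.IsDiag) → M.ncard ≤ k → Good M k := by
  induction k with
  | zero =>
    intro V _ _ M _ _
    exact ⟨Fin.elim0, Fin.elim0, Fin.elim0, fun i => i.elim0, fun i => i.elim0,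
      fun i => i.elim0⟩
  | succ k IH =>
    intro V instV hcard M hnd hMc
    -- Step 1 : an uncovered vertex x
    have hMfin : M.Finite := Set.toFinite M
    obtain ⟨x, hxC⟩ : ∃ x : V, x ∉ {v : V | ∃ e ∈ M, v ∈ e} := by
      by_contra hcon
      push_neg at hcon
      have h1 : (Set.univ : Set V) ⊆ {v : V | ∃ e ∈ M, v ∈ e} := fun v _ => hcon v
      have h2 := Set.ncard_le_ncard h1 (Set.toFinite _)
      have h3 := ncard_covered_le M hMfin
      rw [Set.ncard_univ, Nat.card_eq_fintype_card, hcard] at h2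
      omega
    have hxM : ∀ e ∈ M, x ∉ e := fun e he hx => hxC ⟨e, he, hx⟩
    -- Step 2 : the vertex w
    obtain ⟨w, hwx, hwN⟩ : ∃ w : V, w ≠ x ∧
        (M.Nonempty → ∃ y, y ≠ w ∧ y ≠ x ∧ s(w, y) ∈ M) := by
      rcases M.eq_empty_or_nonempty with hME | hMne
      · obtain ⟨w, hw⟩ := Fintype.exists_ne_of_one_lt_card (by omega) x
        exact ⟨w, hw, fun h => absurd h (by simp [hME, Set.not_nonempty_empty])⟩
      · obtain ⟨e₀, he₀⟩ := hMne
        induction e₀ using Sym2.ind with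
        | _ a b =>
          refine ⟨a, fun hax => hxM _ he₀ (hax ▸ Sym2.mem_mk_left a b), fun _ => ?_⟩
          refine ⟨b, fun hba => hnd _ he₀ (by simp [hba]), ?_, he₀⟩
          intro hbx
          exact hxM _ he₀ (hbx ▸ Sym2.mem_mk_right a b)
    -- Step 3 : structure of M around w
    set N : Set V := {u | u ≠ w ∧ u ≠ x ∧ s(w, u) ∈ M} with hNdef
    set m : ℕ := N.ncard with hmdef
    have hwedge : ∀ e ∈ M, w ∈ e → ∃ u ∈ N, e = s(w, u) := by
      intro e he hwe
      obtain ⟨y, hy⟩ := Sym2.mem_iff_exists.mp hwe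
      subst hy
      refine ⟨y, ⟨fun hyw => hnd _ he (by simp [hyw]), ?_, he⟩, rfl⟩
      intro hyx
      exact hxM _ he (hyx ▸ Sym2.mem_mk_right w y)
    have hNne : M.Nonempty → 1 ≤ m := by
      intro hMne
      obtain ⟨y, h1, h2, h3⟩ := hwN hMne
      have : N.Nonempty := ⟨y, h1, h2, h3⟩
      rw [hmdef]
      exact (Set.ncard_pos (Set.toFinite _)).mpr this
    set MW : Set (Sym2 V) := (fun u => s(w, u)) '' N with hMWdef
    set M' : Set (Sym2 V) := {e ∈ M | w ∉ e} with hM'def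
    have hMWcard : MW.ncard = m := by
      rw [hMWdef, hmdef]
      apply Set.ncard_image_of_injOn
      intro u hu u' hu' heq
      rw [Sym2.eq_iff] at heq
      rcases heq with ⟨-, h⟩ | ⟨h1, h2⟩
      · exact h
      · exact h2.trans h1
    have hMsplit : MW ∪ M' = M := by
      apply Set.Subset.antisymm
      · rintro e (he | he)
        · obtain ⟨u, hu, rfl⟩ := he
          exact hu.2.2
        · exact he.1
      · intro e he
        by_cases hwe : w ∈ e
        · obtain ⟨u, hu, rfl⟩ := hwedge e he hwe
          exact Or.inl ⟨u, hu, rfl⟩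
        · exact Or.inr ⟨he, hwe⟩
    have hM'm : M'.ncard + m ≤ k + 1 := by
      have hdisj : Disjoint MW M' := by
        rw [Set.disjoint_left]
        rintro e ⟨u, hu, rfl⟩ he'
        exact he'.2 (Sym2.mem_mk_left w u)
      have := Set.ncard_union_eq hdisj (Set.toFinite _) (Set.toFinite _)
      rw [hMsplit, hMWcard] at this
      omega
    have hmk : m ≤ k + 1 := le_trans (le_of_eq hMWcard.symm)
      (le_trans (Set.ncard_le_ncard (hMsplit ▸ Set.subset_union_left) hMfin) hMc)
    -- Step 4 : the subtype V'
    have hcard' : Fintype.card {u : V // u ≠ w ∧ u ≠ x} = 2 * k + 1 := by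
      rw [subtype_card_eq hwx, hcard]
      omega
    -- Step 5 : the package (c, L)
    obtain ⟨L, hLN, hLcard⟩ : ∃ L ⊆ N, L.ncard = m - 1 :=
      Set.exists_subset_card_eq (by omega)
    obtain ⟨c, hcfacts⟩ : ∃ c : V, L.Nonempty →
        (c ≠ w ∧ c ≠ x ∧ c ∉ N ∧ ∀ e ∈ M', c ∉ e) := by
      by_cases hm2 : 2 ≤ m
      · have hbad : (N ∪ {v : V | ∃ e ∈ M', v ∈ e} ∪ {w, x}).ncard ≤ 2 * k + 2 := by
          have h1 := ncard_covered_le M' (Set.toFinite _)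
          have h2 : ({w, x} : Set V).ncard ≤ 2 :=
            le_trans (Set.ncard_insert_le w {x}) (by simp)
          have h3 := Set.ncard_union_le (N ∪ {v : V | ∃ e ∈ M', v ∈ e}) ({w, x} : Set V)
          have h4 := Set.ncard_union_le N {v : V | ∃ e ∈ M', v ∈ e}
          omega
        obtain ⟨c, hc⟩ : ∃ c : V, c ∉ N ∪ {v : V | ∃ e ∈ M', v ∈ e} ∪ {w, x} := by
          by_contra hcon
          push_neg at hcon
          have h1 : (Set.univ : Set V) ⊆ _ := fun v _ => hcon v
          have h2 := Set.ncard_le_ncard h1 (Set.toFinite _)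
          rw [Set.ncard_univ, Nat.card_eq_fintype_card, hcard] at h2
          omega
        simp only [Set.mem_union, not_or, Set.mem_setOf_eq, Set.mem_insert_iff,
          Set.mem_singleton_iff] at hc
        push_neg at hc
        exact ⟨c, fun _ => ⟨hc.2.1, hc.2.2, hc.1.1, fun e he hce => hc.1.2 e he hce⟩⟩
      · refine ⟨x, fun hLne => absurd hLne ?_⟩
        have : L.ncard = 0 := by omega
        rw [Set.ncard_eq_zero (Set.toFinite _)] at this
        simp [this, Set.not_nonempty_empty]
    -- Step 6 : the sets A, B with enumerations
    have hPcard : {u : V | u ≠ w ∧ u ≠ x}.ncard = 2 * k + 1 := by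
      rw [← hcard', Fintype.card_subtype, Set.ncard_eq_toFinset_card']
      congr 1
      ext u
      simp
    have hNP : N ⊆ {u : V | u ≠ w ∧ u ≠ x} := fun u hu => ⟨hu.1, hu.2.1⟩
    have hWfree : ({u : V | u ≠ w ∧ u ≠ x} \ N).ncard = 2 * k + 1 - m := by
      rw [Set.ncard_diff hNP (Set.toFinite _), hPcard]
    obtain ⟨A, hAW, hAcard⟩ : ∃ A ⊆ ({u : V | u ≠ w ∧ u ≠ x} \ N), A.ncard = k :=
      Set.exists_subset_card_eq (by omega)
    obtain ⟨B, hBW, hBcard⟩ :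
        ∃ B ⊆ (({u : V | u ≠ w ∧ u ≠ x} \ N) \ A) ∪ L, B.ncard = k := by
      apply Set.exists_subset_card_eq
      have h0 : Disjoint (({u : V | u ≠ w ∧ u ≠ x} \ N) \ A) L := by
        rw [Set.disjoint_left]
        intro u hu huL
        exact hu.1.2 (hLN huL)
      rw [Set.ncard_union_eq h0 (Set.toFinite _) (Set.toFinite _),
        Set.ncard_diff hAW (Set.toFinite _), hWfree, hAcard, hLcard]
      omega
    -- enumerations of A and B
    obtain ⟨a, hamem, hainj⟩ : ∃ a : Fin k → V, (∀ i, a i ∈ A) ∧ Function.Injective a := by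
      have hA' : (Set.toFinite A).toFinset.card = k := by
        rwa [← Set.ncard_eq_toFinset_card A (Set.toFinite A)]
      let eqv := Finset.equivFinOfCardEq hA'
      refine ⟨fun i => (eqv.symm i).1, fun i => ?_, fun i j hij => ?_⟩
      · have := (eqv.symm i).2
        rwa [Set.Finite.mem_toFinset] at this
      · exact eqv.symm.injective (Subtype.ext hij)
    obtain ⟨b, hbmem, hbinj⟩ : ∃ b : Fin k → V, (∀ i, b i ∈ B) ∧ Function.Injective b := by
      have hB' : (Set.toFinite B).toFinset.card = k := by
        rwa [← Set.ncard_eq_toFinset_card B (Set.toFinite B)]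
      let eqv := Finset.equivFinOfCardEq hB'
      refine ⟨fun i => (eqv.symm i).1, fun i => ?_, fun i j hij => ?_⟩
      · have := (eqv.symm i).2
        rwa [Set.Finite.mem_toFinset] at this
      · exact eqv.symm.injective (Subtype.ext hij)
    -- Step 7 : the forbidden set downstairs and the IH
    set EstarV : Set (Sym2 V) := (fun u => s(c, u)) '' L with hEdef
    set M'' : Set (Sym2 {u : V // u ≠ w ∧ u ≠ x}) :=
      {e' | e'.map Subtype.val ∈ M ∪ EstarV} with hM''def
    have hLname : ∀ u ∈ L, u ≠ w ∧ u ≠ x ∧ u ≠ c ∧ c ≠ w ∧ c ≠ x ∧ c ∉ N := by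
      intro u hu
      obtain ⟨hcw, hcx, hcN, -⟩ := hcfacts ⟨u, hu⟩
      have hn := hLN hu
      exact ⟨hn.1, hn.2.1, fun h => hcN (h ▸ hn), hcw, hcx, hcN⟩
    have hM''le : M''.ncard ≤ k := by
      have hinj : Function.Injective (Sym2.map (Subtype.val :
          {u : V // u ≠ w ∧ u ≠ x} → V)) := Sym2.map.injective Subtype.val_injective
      have him : (Sym2.map Subtype.val) '' M'' ⊆ M' ∪ EstarV := by
        rintro e ⟨e', he', rfl⟩
        have hwe : w ∉ e'.map Subtype.val := by
          induction e' using Sym2.ind with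
          | _ a b =>
            intro hmem
            rw [Sym2.map_pair_eq, Sym2.mem_iff] at hmem
            rcases hmem with h | h
            · exact a.2.1 h.symm
            · exact b.2.1 h.symm
        rcases he' with he' | he'
        · exact Or.inl ⟨he', hwe⟩
        · exact Or.inr he'
      have h1 : M''.ncard = ((Sym2.map Subtype.val) '' M'').ncard :=
        (Set.ncard_image_of_injective _ hinj).symm
      have h2 := Set.ncard_le_ncard him (Set.toFinite _)
      have h3 : EstarV.ncard ≤ m - 1 := by
        rw [hEdef, ← hLcard]
        exact Set.ncard_image_le (Set.toFinite _)
      have h4 := Set.ncard_union_le M' EstarV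
      by_cases hMne : M.Nonempty
      · have := hNne hMne
        omega
      · have hM0 : M = ∅ := Set.not_nonempty_iff_eq_empty.mp hMne
        have hL0 : L = ∅ := by
          apply Set.eq_empty_of_subset_empty
          refine subset_trans hLN ?_
          intro u hu
          exact absurd (hM0 ▸ hu.2.2 : s(w,u) ∈ (∅ : Set (Sym2 V))) (by simp)
        have : M'' = ∅ := by
          apply Set.eq_empty_of_subset_empty
          intro e' he'
          rcases he' with h | h
          · rw [hM0] at h; exact absurd h (by simp)
          · rw [hEdef, hL0] at h; simpa using h
        simp [this]
    have hM''nd : ∀ e ∈ M'', ¬ e.IsDiag := by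
      intro e' he'
      induction e' using Sym2.ind with
      | _ a b =>
        intro hdiag
        rw [Sym2.mk_isDiag_iff] at hdiag
        rcases he' with h | h
        · exact hnd _ h (by simp [hdiag])
        · obtain ⟨u, hu, huv⟩ := h
          rw [Sym2.map_pair_eq, Sym2.eq_iff] at huv
          have hfacts := hLname u hu
          rcases huv with ⟨h1, h2⟩ | ⟨h1, h2⟩
          · exact hfacts.2.2.1 (by rw [h2, h1]; exact (congrArg Subtype.val hdiag).symm)
          · exact hfacts.2.2.1 (by rw [h2, h1]; exact congrArg Subtype.val hdiag)
    obtain ⟨r', p', h', hd', hM'', hdisj'⟩ :=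
      IH {u : V // u ≠ w ∧ u ≠ x} hcard' M'' hM''nd hM''le
    -- Step 8 : the construction
    have heta : ∀ (z : {u : V // u ≠ w ∧ u ≠ x}) (h1 : z.1 ≠ w) (h2 : z.1 ≠ x),
        (⟨z.1, h1, h2⟩ : {u : V // u ≠ w ∧ u ≠ x}) = z := fun z h1 h2 => Subtype.ext rfl
    have hafacts : ∀ i, a i ≠ w ∧ a i ≠ x ∧ a i ∉ N ∧ a i ∈ A := by
      intro i
      obtain ⟨hP, hN⟩ := hAW (hamem i)
      exact ⟨hP.1, hP.2, hN, hamem i⟩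
    have hbfacts : ∀ i, b i ≠ w ∧ b i ≠ x ∧ b i ∉ A ∧ b i ∉ N \ L := by
      intro i
      rcases hBW (hbmem i) with ⟨⟨hP, hN⟩, hA⟩ | hL
      · exact ⟨hP.1, hP.2, hA, fun hNL => hN hNL.1⟩
      · have hn := hLN hL
        exact ⟨hn.1, hn.2.1, fun hA => (hAW hA).2 hn, fun hNL => hNL.2 hL⟩
    have hswM : ∀ u : V, u ≠ w → u ≠ x → u ∉ N → s(w, u) ∉ M := by
      intro u h1 h2 h3 hmem
      exact h3 ⟨h1, h2, hmem⟩
    have hLfacts : ∀ u ∈ L, u ≠ w ∧ u ≠ x ∧ u ≠ c ∧ c ≠ w ∧ c ≠ x ∧ c ∉ N ∧ c ∉ L :=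
      fun u hu => by
        obtain ⟨h1, h2, h3, h4, h5, h6⟩ := hLname u hu
        exact ⟨h1, h2, h3, h4, h5, h6, fun hcl => h6 (hLN hcl)⟩
    -- the parent functions
    obtain ⟨pl, hplw, hplx, hplU⟩ : ∃ pl : Fin k → V → V,
        (∀ i, pl i w = a i) ∧ (∀ i, pl i x = b i) ∧
        (∀ i v (h1 : v ≠ w) (h2 : v ≠ x), pl i v = (p' i ⟨v, h1, h2⟩).1) := by
      refine ⟨fun i v => if hv : v = w then a i else if hv2 : v = x then b i
        else (p' i ⟨v, hv, hv2⟩).1, fun i => by simp, fun i => by simp [Ne.symm hwx],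
        fun i v h1 h2 => by simp [h1, h2]⟩
    obtain ⟨pn, hpnx, hpnL, hpnA, hpnW⟩ : ∃ pn : V → V,
        (pn x = w) ∧ (∀ v, v ≠ x → v ∈ L → pn v = c) ∧
        (∀ v, v ≠ x → v ∉ L → (v ∈ A ∨ v ∈ N \ L) → pn v = x) ∧
        (∀ v, v ≠ x → v ∉ L → ¬(v ∈ A ∨ v ∈ N \ L) → pn v = w) := by
      refine ⟨fun v => if v = x then w else if v ∈ L then c
        else if v ∈ A ∨ v ∈ N \ L then x else w, by simp,
        fun v h1 h2 => by simp only [if_neg h1, if_pos h2],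
        fun v h1 h2 h3 => by simp only [if_neg h1, if_neg h2, if_pos h3],
        fun v h1 h2 h3 => by simp only [if_neg h1, if_neg h2, if_neg h3]⟩
    obtain ⟨hn, hhnw, hhnx, hhnL, hhnU⟩ : ∃ hn : V → ℕ,
        (hn w = 0) ∧ (hn x = 1) ∧ (∀ v, v ≠ w → v ≠ x → v ∈ L → hn v = 3) ∧
        (∀ v, v ≠ w → v ≠ x → v ∉ L → hn v = 2) := by
      refine ⟨fun v => if v = w then 0 else if v = x then 1 else if v ∈ L then 3 else 2,
        by simp, by simp [Ne.symm hwx], fun v h1 h2 h3 => by simp [h1, h2, h3],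
        fun v h1 h2 h3 => by simp [h1, h2, h3]⟩
    obtain ⟨hl, hhlw, hhlx, hhlU⟩ : ∃ hl : Fin k → V → ℕ,
        (∀ i, hl i w = (Finset.univ.sup (h' i)) + 1) ∧
        (∀ i, hl i x = (Finset.univ.sup (h' i)) + 1) ∧
        (∀ i v (h1 : v ≠ w) (h2 : v ≠ x), hl i v = h' i ⟨v, h1, h2⟩) := by
      refine ⟨fun i v => if hv : v = w then (Finset.univ.sup (h' i)) + 1
        else if hv2 : v = x then (Finset.univ.sup (h' i)) + 1 else h' i ⟨v, hv, hv2⟩,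
        fun i => by simp, fun i => by simp [Ne.symm hwx], fun i v h1 h2 => by simp [h1, h2]⟩
    have hlsub : ∀ i (z : {u : V // u ≠ w ∧ u ≠ x}), hl i z.1 = h' i z := by
      intro i z
      rw [hhlU i z.1 z.2.1 z.2.2]
    have hlltS : ∀ i (z : {u : V // u ≠ w ∧ u ≠ x}),
        hl i z.1 < (Finset.univ.sup (h' i)) + 1 := by
      intro i z
      rw [hlsub]
      exact Nat.lt_succ_of_le (Finset.le_sup (Finset.mem_univ z))
    -- the new-tree edge case analysis
    have hedge_new : ∀ v : V, v ≠ w →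
        (v = x ∧ pn v = w) ∨
        (v ≠ x ∧ v ∈ L ∧ pn v = c) ∨
        (v ≠ x ∧ v ∉ L ∧ (v ∈ A ∨ v ∈ N \ L) ∧ pn v = x) ∨
        (v ≠ x ∧ v ∉ L ∧ v ∉ A ∧ v ∉ N ∧ pn v = w) := by
      intro v hvw
      by_cases hvx : v = x
      · exact Or.inl ⟨hvx, hvx ▸ hpnx⟩
      by_cases hvL : v ∈ L
      · exact Or.inr (Or.inl ⟨hvx, hvL, hpnL v hvx hvL⟩)
      by_cases hvA : v ∈ A ∨ v ∈ N \ L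
      · exact Or.inr (Or.inr (Or.inl ⟨hvx, hvL, hvA, hpnA v hvx hvL hvA⟩))
      · push_neg at hvA
        have hvN : v ∉ N := by
          intro hvN
          by_cases h : v ∈ L
          · exact hvL h
          · exact (hvA.2 ⟨hvN, h⟩).elim
        exact Or.inr (Or.inr (Or.inr ⟨hvx, hvL, hvA.1, hvN, hpnW v hvx hvL
          (by push_neg; exact hvA)⟩))
    refine ⟨Fin.lastCases w (fun i => (r' i).1), Fin.lastCases pn pl,
      Fin.lastCases hn hl, ?_, ?_, ?_⟩
    · -- heights decrease
      intro i v hvr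
      rcases Fin.eq_castSucc_or_eq_last i with ⟨i, rfl⟩ | rfl
      · simp only [Fin.lastCases_castSucc] at hvr ⊢
        by_cases hvw : v = w
        · subst hvw
          rw [hplw, hhlw, hhlU i (a i) (hafacts i).1 (hafacts i).2.1]
          exact Nat.lt_succ_of_le (Finset.le_sup (Finset.mem_univ _))
        by_cases hvx : v = x
        · subst hvx
          rw [hplx, hhlx, hhlU i (b i) (hbfacts i).1 (hbfacts i).2.1]
          exact Nat.lt_succ_of_le (Finset.le_sup (Finset.mem_univ _))
        · rw [hplU i v hvw hvx, hhlU i v hvw hvx, hlsub]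
          exact hd' i ⟨v, hvw, hvx⟩ (fun he => hvr (congrArg Subtype.val he))
      · simp only [Fin.lastCases_last] at hvr ⊢
        rcases hedge_new v hvr with ⟨hvx, hpv⟩ | ⟨hvx, hvL, hpv⟩ |
          ⟨hvx, hvL, hvA, hpv⟩ | ⟨hvx, hvL, hvA, hvN, hpv⟩
        · rw [hpv, hhnw, hvx, hhnx]; omega
        · obtain ⟨h1, h2, h3, h4, h5, h6, h7⟩ := hLfacts v hvL
          rw [hpv, hhnU c h4 h5 h7, hhnL v h1 hvx hvL]; omega
        · have hvw : v ≠ w := hvr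
          rw [hpv, hhnx, hhnU v hvw hvx hvL]; omega
        · rw [hpv, hhnw, hhnU v hvr hvx hvL]; omega
    · -- avoid M
      intro i v hvr
      rcases Fin.eq_castSucc_or_eq_last i with ⟨i, rfl⟩ | rfl
      · simp only [Fin.lastCases_castSucc] at hvr ⊢
        by_cases hvw : v = w
        · subst hvw
          rw [hplw]
          exact hswM (a i) (hafacts i).1 (hafacts i).2.1 (hafacts i).2.2.1
        by_cases hvx : v = x
        · rw [hvx, hplx]
          exact fun hmem => hxM _ hmem (Sym2.mem_mk_left x (b i))
        · rw [hplU i v hvw hvx]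
          intro hmem
          have hnm := hM'' i ⟨v, hvw, hvx⟩ (fun he => hvr (congrArg Subtype.val he))
          apply hnm
          rw [hM''def]
          have : Sym2.map Subtype.val s(((⟨v, hvw, hvx⟩ : {u : V // u ≠ w ∧ u ≠ x})),
              p' i ⟨v, hvw, hvx⟩) = s(v, (p' i ⟨v, hvw, hvx⟩).1) := by
            rw [Sym2.map_pair_eq]
          exact Set.mem_setOf_eq ▸ (this ▸ Or.inl hmem)
      · simp only [Fin.lastCases_last] at hvr ⊢
        rcases hedge_new v hvr with ⟨hvx, hpv⟩ | ⟨hvx, hvL, hpv⟩ |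
          ⟨hvx, hvL, hvA, hpv⟩ | ⟨hvx, hvL, hvA, hvN, hpv⟩
        · rw [hpv, hvx]
          exact fun hmem => hxM _ hmem (Sym2.mem_mk_left x w)
        · rw [hpv]
          intro hmem
          obtain ⟨h1, h2, h3, h4, h5, h6, h7⟩ := hLfacts v hvL
          have hwe : w ∉ s(v, c) := by
            rw [Sym2.mem_iff]
            push_neg
            exact ⟨Ne.symm h1, Ne.symm h4⟩
          obtain ⟨-, -, -, hcM'⟩ := hcfacts ⟨v, hvL⟩
          exact hcM' _ ⟨hmem, hwe⟩ (Sym2.mem_mk_right v c)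
        · rw [hpv]
          exact fun hmem => hxM _ hmem (Sym2.mem_mk_right v x)
        · rw [hpv]
          intro hmem
          exact hswM v hvr hvx hvN (Sym2.eq_swap ▸ hmem)
    · -- disjointness
      have hanch : ∀ z q1 q2 : V, q1 ≠ q2 → z ≠ q2 → s(z, q1) ≠ s(z, q2) := by
        intro z q1 q2 h1 h2 heq
        rw [Sym2.eq_iff] at heq
        tauto
      have hno1 : ∀ a1 b1 c1 d1 : V, a1 ≠ c1 → a1 ≠ d1 → s(a1, b1) ≠ s(c1, d1) := by
        intro a1 b1 c1 d1 h1 h2 heq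
        rw [Sym2.eq_iff] at heq
        tauto
      have hno2 : ∀ a1 b1 c1 d1 : V, b1 ≠ d1 → a1 ≠ d1 → s(a1, b1) ≠ s(c1, d1) := by
        intro a1 b1 c1 d1 h1 h2 heq
        rw [Sym2.eq_iff] at heq
        tauto
      have hsubne : ∀ i (v : V) (h1 : v ≠ w) (h2 : v ≠ x), v ≠ (r' i).1 →
          (⟨v, h1, h2⟩ : {u : V // u ≠ w ∧ u ≠ x}) ≠ r' i :=
        fun i v h1 h2 hv he => hv (congrArg Subtype.val he)
      have hmapedge : ∀ i (v : V) (h1 : v ≠ w) (h2 : v ≠ x), s(v, pl i v) =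
          Sym2.map Subtype.val s((⟨v, h1, h2⟩ : {u : V // u ≠ w ∧ u ≠ x}),
            p' i ⟨v, h1, h2⟩) := by
        intro i v h1 h2
        rw [Sym2.map_pair_eq, hplU i v h1 h2]
      have havoid : ∀ i (z : {u : V // u ≠ w ∧ u ≠ x}), z ≠ r' i →
          Sym2.map Subtype.val s(z, p' i z) ∉ M ∪ EstarV :=
        fun i z hz hmem => hM'' i z hz hmem
      -- lifted tree versus new tree
      have hmain : ∀ i (v u : V), v ≠ (r' i).1 → u ≠ w →
          s(v, pl i v) ≠ s(u, pn u) := by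
        intro i v u hvr huw
        rcases hedge_new u huw with ⟨hux, hpu⟩ | ⟨hux, huL, hpu⟩ |
          ⟨hux, huL, huA, hpu⟩ | ⟨hux, huL, huA, huN, hpu⟩
        · -- edge s(x, w)
          rw [hpu, hux]
          by_cases hvw : v = w
          · rw [hvw, hplw, Sym2.eq_swap (a := x)]
            exact hanch w (a i) x (hafacts i).2.1 hwx
          by_cases hvx : v = x
          · rw [hvx, hplx]
            exact hanch x (b i) w (hbfacts i).1 (Ne.symm hwx)
          · rw [hplU i v hvw hvx]
            exact hno1 v _ x w hvx hvw
        · -- edge s(u, c) with u ∈ L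
          obtain ⟨h1, h2, h3, h4, h5, h6, h7⟩ := hLfacts u huL
          rw [hpu]
          by_cases hvw : v = w
          · rw [hvw, hplw]
            exact hno1 w (a i) u c (Ne.symm h1) (Ne.symm h4)
          by_cases hvx : v = x
          · rw [hvx, hplx]
            exact hno1 x (b i) u c (Ne.symm h2) (Ne.symm h5)
          · rw [hplU i v hvw hvx]
            intro heq
            apply havoid i ⟨v, hvw, hvx⟩ (hsubne i v hvw hvx hvr)
            rw [← hmapedge i v hvw hvx, hplU i v hvw hvx] at *
            right
            exact ⟨u, huL, by rw [heq, Sym2.eq_swap]⟩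
        · -- edge s(u, x) with u ∈ A ∪ (N £ L)
          have huwx : u ≠ w ∧ u ≠ x := by
            rcases huA with h | h
            · exact ⟨((hAW h).1).1, ((hAW h).1).2⟩
            · exact ⟨(h.1).1, (h.1).2.1⟩
          rw [hpu]
          by_cases hvw : v = w
          · rw [hvw, hplw]
            exact hno1 w (a i) u x (Ne.symm huwx.1) hwx
          by_cases hvx : v = x
          · rw [hvx, hplx, Sym2.eq_swap (a := u)]
            have hbu : b i ≠ u := by
              intro hh
              rcases huA with h | h
              · exact (hbfacts i).2.2.1 (hh ▸ h)
              · exact (hbfacts i).2.2.2 (hh ▸ h)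
            exact hanch x (b i) u hbu (Ne.symm huwx.2)
          · rw [hplU i v hvw hvx]
            exact hno2 v _ u x (p' i ⟨v, hvw, hvx⟩).2.2 hvx
        · -- edge s(u, w)
          rw [hpu]
          by_cases hvw : v = w
          · rw [hvw, hplw, Sym2.eq_swap (a := u)]
            have hau : a i ≠ u := fun hh => huA (hh ▸ (hafacts i).2.2.2)
            exact hanch w (a i) u hau (Ne.symm huw)
          by_cases hvx : v = x
          · rw [hvx, hplx]
            exact hno1 x (b i) u w (Ne.symm hux) (Ne.symm hwx)
          · rw [hplU i v hvw hvx]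
            exact hno2 v _ u w (p' i ⟨v, hvw, hvx⟩).2.1 hvw
      -- two lifted trees
      have hcc : ∀ i j, i ≠ j → ∀ v u, v ≠ (r' i).1 → u ≠ (r' j).1 →
          s(v, pl i v) ≠ s(u, pl j u) := by
        intro i j hij v u hvr hur
        by_cases huw : u = w
        · rw [huw, hplw]
          by_cases hvw : v = w
          · rw [hvw, hplw]
            exact hanch w (a i) (a j) (fun hh => hij (hainj hh)) (Ne.symm (hafacts j).1)
          by_cases hvx : v = x
          · rw [hvx, hplx]
            exact hno1 x (b i) w (a j) (Ne.symm hwx) (Ne.symm (hafacts j).2.1)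
          · rw [hplU i v hvw hvx]
            exact (hno1 w (a j) v _ (Ne.symm hvw)
              (Ne.symm (p' i ⟨v, hvw, hvx⟩).2.1)).symm
        by_cases hux : u = x
        · rw [hux, hplx]
          by_cases hvw : v = w
          · rw [hvw, hplw]
            exact hno1 w (a i) x (b j) hwx (Ne.symm (hbfacts j).1)
          by_cases hvx : v = x
          · rw [hvx, hplx]
            exact hanch x (b i) (b j) (fun hh => hij (hbinj hh)) (Ne.symm (hbfacts j).2.1)
          · rw [hplU i v hvw hvx]
            exact (hno1 x (b j) v _ (Ne.symm hvx)
              (Ne.symm (p' i ⟨v, hvw, hvx⟩).2.2)).symm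
        · rw [hplU j u huw hux]
          by_cases hvw : v = w
          · rw [hvw, hplw]
            exact hno1 w (a i) u _ (Ne.symm huw) (Ne.symm (p' j ⟨u, huw, hux⟩).2.1)
          by_cases hvx : v = x
          · rw [hvx, hplx]
            exact hno1 x (b i) u _ (Ne.symm hux) (Ne.symm (p' j ⟨u, huw, hux⟩).2.2)
          · rw [hplU i v hvw hvx]
            intro heq
            have he1 := hmapedge i v hvw hvx
            have he2 := hmapedge j u huw hux
            rw [hplU i v hvw hvx] at he1
            rw [hplU j u huw hux] at he2
            have := (Sym2.map.injective Subtype.val_injective) (he1 ▸ he2 ▸ heq)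
            exact hdisj' i j ⟨v, hvw, hvx⟩ ⟨u, huw, hux⟩ hij
              (hsubne i v hvw hvx hvr) (hsubne j u huw hux hur) this
      intro i j v u hij hvr hur
      rcases Fin.eq_castSucc_or_eq_last i with ⟨i', rfl⟩ | rfl <;>
        rcases Fin.eq_castSucc_or_eq_last j with ⟨j', rfl⟩ | rfl
      · simp only [Fin.lastCases_castSucc] at hvr hur ⊢
        exact hcc i' j' (fun hh => hij (by rw [hh])) v u hvr hur
      · simp only [Fin.lastCases_castSucc, Fin.lastCases_last] at hvr hur ⊢
        exact hmain i' v u hvr hur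
      · simp only [Fin.lastCases_castSucc, Fin.lastCases_last] at hvr hur ⊢
        exact (hmain j' u v hur hvr).symm
      · exact absurd rfl hij





theorem stmt14 (n : ℕ) (hn : Odd n) (M : Set (Sym2 (Fin n)))
    (hM : M ⊆ (⊤ : SimpleGraph (Fin n)).edgeSet) (hMcard : M.ncard ≤ (n - 1) / 2) :
    ∃ T : Fin ((n - 1) / 2) → ((⊤ : SimpleGraph (Fin n)).deleteEdges M).Subgraph,
      (∀ i, (T i).IsSpanning ∧ (T i).coe.IsTree) ∧
      ∀ i j, i ≠ j → (T i).edgeSet ∩ (T j).edgeSet = ∅ := by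
  obtain ⟨k, hk⟩ := hn
  have hkk : (n - 1) / 2 = k := by omega
  rw [hkk] at hMcard ⊢
  have hnd : ∀ e ∈ M, ¬ e.IsDiag := by
    intro e he
    have := hM he
    rwa [edgeSet_top, Set.mem_compl_iff, Sym2.mem_diagSet] at this
  exact good_to_subgraphs M k
    (key k (Fin n) (by rw [Fintype.card_fin]; omega) M hnd hMcard)
end

section
/- For graphs G of order n (n ≥ 2) and 2 ≤ k ≤ n, the Nordhaus–Gaddum bounds hold: 1 ≤ λ_k(G) + λ_k(Ḡ) ≤ n − ⌈k/2⌉, where Ḡ is the complement of G, with λ_k(H) = 0 whenever H is disconnected. -/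
open SimpleGraph
open scoped Classical

lemma two_mul_choose_two (n : ℕ) : 2 * n.choose 2 = n * (n - 1) := by
  rw [Nat.choose_two_right, Nat.mul_div_cancel']
  rcases n with _ | m
  · simp
  · simpa [Nat.succ_sub_one, Nat.mul_comm] using (Nat.even_mul_succ_self m).two_dvd

lemma pairs_card {V : Type*} [Fintype V] (A : Finset V) :
    ((Finset.univ : Finset (Sym2 V)).filter (fun e => ¬ e.IsDiag ∧ ∀ v ∈ e, v ∈ A)).card
      = A.card.choose 2 := by
  have h1 : ((Finset.univ : Finset (Sym2 ↥A)).filter (fun e => ¬ e.IsDiag)).card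
      = A.card.choose 2 := by
    rw [← Fintype.card_subtype, Sym2.card_subtype_not_diag, Fintype.card_coe]
  rw [← h1]
  refine (Finset.card_bij (fun (e : Sym2 ↥A) _ => e.map Subtype.val) ?_ ?_ ?_).symm
  · intro e he
    simp only [Finset.mem_filter, Finset.mem_univ, true_and] at he ⊢
    refine ⟨by rwa [Sym2.isDiag_map Subtype.val_injective], ?_⟩
    induction e with
    | _ a b =>
      intro v hv
      rw [Sym2.map_pair_eq, Sym2.mem_iff] at hv
      rcases hv with rfl | rfl
      · exact a.2
      · exact b.2
  · intro e₁ _ e₂ _ h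
    exact Sym2.map.injective Subtype.val_injective h
  · intro e he
    simp only [Finset.mem_filter, Finset.mem_univ, true_and] at he
    obtain ⟨hd, hm⟩ := he
    induction e with
    | _ u v =>
      refine ⟨s(⟨u, hm u (by simp)⟩, ⟨v, hm v (by simp)⟩), ?_, by simp⟩
      simp only [Finset.mem_filter, Finset.mem_univ, true_and, Sym2.mk_isDiag_iff]
      intro h
      exact hd (Sym2.mk_isDiag_iff.mpr (congrArg Subtype.val h))

open SimpleGraph Walk in
lemma tree_incident_card {W : Type*} [Fintype W] {H : SimpleGraph W} (hT : H.IsTree)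
    (r : W) (A : Finset W) (hr : r ∉ A) :
    A.card ≤ (H.edgeFinset.filter (fun e => ∃ v ∈ A, v ∈ e)).card := by
  classical
  choose f hf hf' using (hT.existsUnique_path · r)
  have hne : ∀ a ∈ A, a ≠ r := fun a ha h => hr (h ▸ ha)
  set g : W → Sym2 W := fun w =>
    if h : w = r then s(r, r) else ((f w).firstDart (not_nil_of_ne h)).edge with hg
  apply Finset.card_le_card_of_injOn g
  · intro a ha
    have har := hne a ha
    rw [Finset.mem_coe, Finset.mem_filter, mem_edgeFinset]
    simp only [hg, dif_neg har]
    exact ⟨Dart.edge_mem _, a, ha, by rw [edge_firstDart]; exact Sym2.mem_mk_left _ _⟩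
  · intro a ha b hb hab
    simp only [Finset.mem_coe] at ha hb
    have har := hne a ha; have hbr := hne b hb
    simp only [hg, dif_neg har, dif_neg hbr] at hab
    wlog h' : (f a).length ≤ (f b).length generalizing a b
    · exact (this hb ha hbr har hab.symm (le_of_not_ge h')).symm
    rw [dart_edge_eq_iff] at hab
    obtain (h | h) := hab
    · exact congrArg (·.fst) h
    · have h1 : ((f a).firstDart <| not_nil_of_ne har).snd = b := congrArg (·.snd) h
      have h3 := congrArg Walk.length (hf' _ ((f a).tail.copy h1 rfl) ?_)
      · replace h3 := (Walk.length_copy _ _ _).symm.trans h3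
        rw [← add_left_inj 1,
          length_tail_add_one (not_nil_of_ne har)] at h3
        omega
      · simp only [ne_eq, eq_mp_eq_cast, id_eq, isPath_copy]
        exact (isPath_copy (f a).tail _ _).mpr (hf _).tail

lemma subgraph_incident_card {V : Type*} [Fintype V] {G : SimpleGraph V} {T : G.Subgraph}
    (hT : T.coe.IsTree) (A : Finset V) (hA : ↑A ⊆ T.verts) {r : V} (hrT : r ∈ T.verts)
    (hrA : r ∉ A) :
    A.card ≤ (T.edgeSet.toFinset.filter (fun e => ∃ v ∈ A, v ∈ e)).card := by
  classical
  set A' : Finset ↥T.verts := Finset.univ.filter (fun w : ↥T.verts => ↑w ∈ A) with hA'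
  have hcard : A'.card = A.card := by
    refine Finset.card_bij (fun w _ => ↑w) ?_ ?_ ?_
    · intro w hw; simpa [hA'] using hw
    · intro w₁ _ w₂ _ h; exact Subtype.ext h
    · intro a ha; exact ⟨⟨a, hA ha⟩, by simpa [hA'], rfl⟩
  have h1 := tree_incident_card hT ⟨r, hrT⟩ A' (by simp [hA', hrA])
  rw [hcard] at h1
  refine h1.trans ?_
  refine Finset.card_le_card_of_injOn (fun e => e.map Subtype.val) ?_ ?_
  · intro e he
    simp only [Finset.mem_coe, Finset.mem_filter, mem_edgeFinset, Subgraph.edgeSet_coe, Set.mem_preimage] at he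
    obtain ⟨hee, v, hv, hve⟩ := he
    simp only [Finset.mem_coe, Finset.mem_filter, Set.mem_toFinset]
    exact ⟨hee, ↑v, by simpa [hA'] using hv, by
      induction e with
      | _ a b =>
        rw [Sym2.mem_iff] at hve
        rcases hve with rfl | rfl
        · exact Sym2.mem_mk_left _ _
        · exact Sym2.mem_mk_right _ _⟩
  · intro e₁ _ e₂ _ h
    exact Sym2.map.injective Subtype.val_injective h

lemma mem_verts_of_mem_subgraph_edgeSet {V : Type*} {G : SimpleGraph V} {T : G.Subgraph}
    {e : Sym2 V} (he : e ∈ T.edgeSet) : ∀ v ∈ e, v ∈ T.verts := by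
  induction e with
  | _ a b =>
    rw [Subgraph.mem_edgeSet] at he
    intro v hv
    rw [Sym2.mem_iff] at hv
    rcases hv with rfl | rfl
    · exact he.fst_mem
    · exact he.snd_mem

lemma tree_facts {V : Type*} [Fintype V] {G : SimpleGraph V} {T : G.Subgraph} (S : Finset V)
    (hst : IsSteinerTree G ↑S T) (hk : 1 ≤ S.card) :
    (S.card - 1 ≤ (T.edgeSet.toFinset.filter (fun e => ∃ v ∈ S, v ∈ e)).card) ∧
    (T.verts ≠ ↑S → S.card ≤ (T.edgeSet.toFinset.filter (fun e => ∃ v ∈ S, v ∈ e)).card) ∧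
    ((T.edgeSet.toFinset.filter (fun e => ∃ v ∈ S, v ∈ e)) ⊆
      Finset.univ.filter (fun e => ¬ e.IsDiag ∧ ∃ v ∈ S, v ∈ e)) ∧
    (T.verts = ↑S → (T.edgeSet.toFinset.filter (fun e => ∃ v ∈ S, v ∈ e)) ⊆
      Finset.univ.filter (fun e => ¬ e.IsDiag ∧ ∀ v ∈ e, v ∈ S)) := by
  classical
  obtain ⟨hS, hT⟩ := hst
  have hndiag : ∀ e ∈ T.edgeSet, ¬ e.IsDiag := fun e he =>
    G.not_isDiag_of_mem_edgeSet (T.edgeSet_subset he)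
  refine ⟨?_, ?_, ?_, ?_⟩
  · obtain ⟨s₀, hs₀⟩ := Finset.card_pos.mp hk
    have h := subgraph_incident_card hT (S.erase s₀)
      (fun v hv => hS (Finset.mem_of_mem_erase (by exact_mod_cast hv)))
      (hS hs₀) (Finset.notMem_erase _ _)
    rw [Finset.card_erase_of_mem hs₀] at h
    refine h.trans (Finset.card_le_card (Finset.monotone_filter_right _ ?_))
    intro e _ he
    obtain ⟨v, hv, hve⟩ := he
    exact ⟨v, Finset.mem_of_mem_erase hv, hve⟩
  · intro hne
    have : ∃ r ∈ T.verts, r ∉ S := by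
      by_contra hcon
      push_neg at hcon
      exact hne (Set.Subset.antisymm (fun v hv => hcon v hv) hS)
    obtain ⟨r, hrT, hrS⟩ := this
    exact subgraph_incident_card hT S hS hrT hrS
  · intro e he
    simp only [Finset.mem_filter, Set.mem_toFinset] at he ⊢
    exact ⟨Finset.mem_univ _, hndiag e he.1, he.2⟩
  · intro hveq e he
    simp only [Finset.mem_filter, Set.mem_toFinset] at he ⊢
    refine ⟨Finset.mem_univ _, hndiag e he.1, fun v hv => ?_⟩
    have := mem_verts_of_mem_subgraph_edgeSet he.1 v hv
    rwa [hveq] at this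

lemma nat_id_aux {k n : ℕ} (h1 : 1 ≤ k) (hkn : k ≤ n) :
    n * (n - 1) + k = (n - k) * (n - k - 1) + k * (2 * n - k) := by
  rcases Nat.eq_or_lt_of_le hkn with rfl | hlt
  · rw [Nat.sub_self, Nat.zero_mul, Nat.zero_add, Nat.two_mul, Nat.add_sub_cancel,
      ← Nat.mul_succ, Nat.succ_eq_add_one, Nat.sub_add_cancel h1]
  · zify [hkn, (show 1 ≤ n by omega), (show 1 ≤ n - k by omega), (show k ≤ 2 * n by omega)]
    ring

lemma count_main {V : Type*} [Fintype V] {G : SimpleGraph V} (S : Finset V) {k : ℕ}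
    (hk : S.card = k) (hk2 : 2 ≤ k) {t t' : ℕ}
    (T : Fin t → G.Subgraph) (U : Fin t' → Gᶜ.Subgraph)
    (hT : ∀ i, IsSteinerTree G ↑S (T i)) (hU : ∀ i, IsSteinerTree Gᶜ ↑S (U i))
    (hTd : ∀ i j, i ≠ j → (T i).edgeSet ∩ (T j).edgeSet = ∅)
    (hUd : ∀ i j, i ≠ j → (U i).edgeSet ∩ (U j).edgeSet = ∅) :
    t + t' ≤ Fintype.card V - (k + 1) / 2 := by
  classical
  set n := Fintype.card V with hn
  have hkn : k ≤ n := hk ▸ (Finset.card_le_univ S).trans_eq (Finset.card_univ)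
  set E : Sum (Fin t) (Fin t') → Finset (Sym2 V) :=
    Sum.elim (fun i => (T i).edgeSet.toFinset) (fun j => (U j).edgeSet.toFinset) with hE
  set F : Sum (Fin t) (Fin t') → Finset (Sym2 V) := fun i => (E i).filter (fun e => ∃ v ∈ S, v ∈ e) with hF
  set Vt : Sum (Fin t) (Fin t') → Set V := Sum.elim (fun i => (T i).verts) (fun j => (U j).verts) with hVt
  set W : Finset (Sym2 V) :=
    Finset.univ.filter (fun e => ¬ e.IsDiag ∧ ∃ v ∈ S, v ∈ e) with hW
  set WIn : Finset (Sym2 V) :=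
    Finset.univ.filter (fun e => ¬ e.IsDiag ∧ ∀ v ∈ e, v ∈ S) with hWIn
  have hk1 : 1 ≤ S.card := by omega
  -- per-tree facts
  have facts : ∀ i : Sum (Fin t) (Fin t'), (k - 1 ≤ (F i).card) ∧ (Vt i ≠ ↑S → k ≤ (F i).card) ∧
      (F i ⊆ W) ∧ (Vt i = ↑S → F i ⊆ WIn) := by
    rintro (i | j)
    · have := tree_facts S (hT i) hk1
      rw [hk] at this
      exact this
    · have := tree_facts S (hU j) hk1
      rw [hk] at this
      exact this
  -- disjointness
  have hGdisj : ∀ e, e ∈ G.edgeSet → e ∈ Gᶜ.edgeSet → False := by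
    intro e
    induction e with
    | _ a b =>
      intro h1 h2
      rw [mem_edgeSet] at h1 h2
      exact (compl_adj G a b).mp h2 |>.2 h1
  have hdisj : ∀ x ∈ (Finset.univ : Finset (Sum (Fin t) (Fin t'))), ∀ y ∈ (Finset.univ : Finset (Sum (Fin t) (Fin t'))), x ≠ y →
      Disjoint (F x) (F y) := by
    rintro x - y - hxy
    rw [Finset.disjoint_left]
    intro e hex hey
    have hex' : e ∈ E x := Finset.mem_filter.mp hex |>.1
    have hey' : e ∈ E y := Finset.mem_filter.mp hey |>.1
    rcases x with i | i <;> rcases y with j | j <;>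
        simp only [hE, Sum.elim_inl, Sum.elim_inr, Set.mem_toFinset] at hex' hey'
    · have hij : i ≠ j := fun h => hxy (by rw [h])
      exact Set.eq_empty_iff_forall_notMem.mp (hTd i j hij) e ⟨hex', hey'⟩
    · exact hGdisj e ((T i).edgeSet_subset hex') ((U j).edgeSet_subset hey')
    · exact hGdisj e ((T j).edgeSet_subset hey') ((U i).edgeSet_subset hex')
    · have hij : i ≠ j := fun h => hxy (by rw [h])
      exact Set.eq_empty_iff_forall_notMem.mp (hUd i j hij) e ⟨hex', hey'⟩
  set I : Finset (Sum (Fin t) (Fin t')) := Finset.univ.filter (fun i => Vt i = ↑S) with hI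
  set A := I.card with hA
  -- sums
  have hsum1 : ∑ i : Sum (Fin t) (Fin t'), (F i).card ≤ W.card := by
    rw [← Finset.card_biUnion hdisj]
    exact Finset.card_le_card (Finset.biUnion_subset.mpr (fun i _ => (facts i).2.2.1))
  have hsum2 : A * (k - 1) ≤ WIn.card := by
    calc A * (k - 1) = ∑ _i ∈ I, (k - 1) := by rw [Finset.sum_const, smul_eq_mul]
    _ ≤ ∑ i ∈ I, (F i).card := Finset.sum_le_sum (fun i _ => (facts i).1)
    _ = (I.biUnion F).card :=
        (Finset.card_biUnion (fun x hx y hy h => hdisj x (Finset.mem_univ x) y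
          (Finset.mem_univ y) h)).symm
    _ ≤ WIn.card := Finset.card_le_card (Finset.biUnion_subset.mpr
        (fun i hi => (facts i).2.2.2 (Finset.mem_filter.mp hi).2))
  have hsum3 : (t + t') * k ≤ (∑ i : Sum (Fin t) (Fin t'), (F i).card) + A := by
    have hpt : ∀ i : Sum (Fin t) (Fin t'), k ≤ (F i).card + (if Vt i = ↑S then 1 else 0) := by
      intro i
      by_cases h : Vt i = ↑S
      · rw [if_pos h]
        have := (facts i).1
        omega
      · rw [if_neg h]
        have := (facts i).2.1 h
        omega
    calc (t + t') * k = ∑ _i : Sum (Fin t) (Fin t'), k := by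
          rw [Finset.sum_const, Finset.card_univ, smul_eq_mul, Fintype.card_sum,
            Fintype.card_fin, Fintype.card_fin]
    _ ≤ ∑ i : Sum (Fin t) (Fin t'), ((F i).card + (if Vt i = ↑S then 1 else 0)) :=
        Finset.sum_le_sum (fun i _ => hpt i)
    _ = (∑ i : Sum (Fin t) (Fin t'), (F i).card) + A := by
        rw [Finset.sum_add_distrib, hA, hI, Finset.card_filter]
  -- cardinalities of W and WIn
  have hWIn : WIn.card = k.choose 2 := by rw [hWIn, ← hk]; exact pairs_card S
  have hWcard : W.card + (n - k).choose 2 = n.choose 2 := by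
    have h1 : W = (Finset.univ.filter (fun e : Sym2 V => ¬ e.IsDiag)).filter
        (fun e => ∃ v ∈ S, v ∈ e) := by rw [hW, Finset.filter_filter]
    have h2 : (Finset.univ.filter (fun e : Sym2 V => ¬ e.IsDiag)).filter
        (fun e => ¬ ∃ v ∈ S, v ∈ e) = Finset.univ.filter
          (fun e : Sym2 V => ¬ e.IsDiag ∧ ∀ v ∈ e, v ∈ Sᶜ) := by
      rw [Finset.filter_filter]
      apply Finset.filter_congr
      intro e _
      simp only [not_exists, Finset.mem_compl]
      exact and_congr_right (fun _ => ⟨fun h v hve hvS => h v ⟨hvS, hve⟩, fun h x hx => h x hx.2 hx.1⟩)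
    have h3 := Finset.card_filter_add_card_filter_not
      (s := Finset.univ.filter (fun e : Sym2 V => ¬ e.IsDiag))
      (p := fun e => ∃ v ∈ S, v ∈ e)
    rw [← h1, h2] at h3
    have h4 : (Finset.univ.filter (fun e : Sym2 V => ¬ e.IsDiag ∧ ∀ v ∈ e, v ∈ Sᶜ)).card
        = (n - k).choose 2 := by
      rw [pairs_card Sᶜ, Finset.card_compl, hk, hn]
    have h5 : (Finset.univ.filter (fun e : Sym2 V => ¬ e.IsDiag)).card = n.choose 2 := by
      have := pairs_card (Finset.univ : Finset V)
      rw [Finset.card_univ, ← hn] at this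
      rw [← this]
      congr 1
      apply Finset.filter_congr
      intro e _
      simp
    rw [h4, h5] at h3
    exact h3
  -- final arithmetic
  have h2A : 2 * A ≤ k := by
    have : (2 * A) * (k - 1) ≤ k * (k - 1) := by
      calc (2 * A) * (k - 1) = 2 * (A * (k - 1)) := by ring
      _ ≤ 2 * k.choose 2 := by omega
      _ = k * (k - 1) := two_mul_choose_two k
    exact Nat.le_of_mul_le_mul_right this (by omega)
  have hid := nat_id_aux (show 1 ≤ k by omega) hkn
  have hcn := two_mul_choose_two n
  have hcnk := two_mul_choose_two (n - k)
  have hck := two_mul_choose_two k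
  have hW2 : 2 * W.card + k = k * (2 * n - k) := by
    have h3' : 2 * W.card + 2 * ((n - k).choose 2) = 2 * (n.choose 2) := by omega
    omega
  have hfin : (2 * (t + t')) * k ≤ (2 * n - k) * k := by
    calc (2 * (t + t')) * k = 2 * ((t + t') * k) := by ring
    _ ≤ 2 * ((∑ i : Sum (Fin t) (Fin t'), (F i).card) + A) := by omega
    _ = 2 * (∑ i : Sum (Fin t) (Fin t'), (F i).card) + 2 * A := by ring
    _ ≤ 2 * W.card + k := by omega
    _ = k * (2 * n - k) := hW2
    _ = (2 * n - k) * k := Nat.mul_comm _ _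
  have : 2 * (t + t') ≤ 2 * n - k := Nat.le_of_mul_le_mul_right hfin (by omega)
  omega

lemma compl_adj_of_not_reachable {V : Type*} {G : SimpleGraph V} {a b : V}
    (hab : a ≠ b) (h : ¬ G.Reachable a b) : Gᶜ.Adj a b :=
  (compl_adj G a b).mpr ⟨hab, fun hadj => h hadj.reachable⟩

lemma compl_connected_of_not_connected {V : Type*} [Nonempty V] {G : SimpleGraph V}
    (h : ¬ G.Connected) : Gᶜ.Connected := by
  have hnp : ¬ G.Preconnected := fun hp => h ⟨hp⟩
  rw [SimpleGraph.Preconnected] at hnp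
  push_neg at hnp
  obtain ⟨x, y, hxy⟩ := hnp
  have hxyne : x ≠ y := fun h => hxy (h ▸ Reachable.refl x)
  refine ⟨fun u v => ?_⟩
  by_cases huv : G.Reachable u v
  · -- find w not reachable from u
    have hw : ∃ w, ¬ G.Reachable u w ∧ w ≠ u ∧ w ≠ v := by
      by_cases hux : G.Reachable u x
      · refine ⟨y, fun hr => hxy (hux.symm.trans hr), ?_, ?_⟩
        · rintro rfl; exact hxy hux.symm
        · rintro rfl; exact hxy (hux.symm.trans huv)
      · refine ⟨x, hux, ?_, ?_⟩
        · rintro rfl; exact hux (Reachable.refl _)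
        · rintro rfl; exact hux huv
    obtain ⟨w, hw1, hw2, hw3⟩ := hw
    have h1 : Gᶜ.Adj u w := compl_adj_of_not_reachable (Ne.symm hw2) hw1
    have h2 : Gᶜ.Adj w v := compl_adj_of_not_reachable hw3
      (fun hr => hw1 (huv.trans hr.symm))
    exact (h1.reachable).trans h2.reachable
  · by_cases hne : u = v
    · exact hne ▸ Reachable.refl u
    · exact (compl_adj_of_not_reachable hne huv).reachable

lemma reachable_delete_of_cycle_edge {V : Type*} {G : SimpleGraph V} {a b : V}
    (hre : (G \ fromEdgeSet {s(a, b)}).Reachable a b) :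
    ∀ x y, G.Reachable x y → (G \ fromEdgeSet {s(a, b)}).Reachable x y := by
  intro x y hxy
  obtain ⟨w⟩ := hxy
  induction w with
  | nil => exact Reachable.refl _
  | @cons u c d hadj p ih =>
    refine Reachable.trans ?_ ih
    by_cases he : s(u, c) = s(a, b)
    · rw [Sym2.eq_iff] at he
      rcases he with ⟨rfl, rfl⟩ | ⟨rfl, rfl⟩
      · exact hre
      · exact hre.symm
    · refine Adj.reachable ?_
      rw [sdiff_adj]
      refine ⟨hadj, fun hfe => ?_⟩
      rw [fromEdgeSet_adj] at hfe
      exact he hfe.1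

lemma exists_tree_le_aux {V : Type*} [Fintype V] :
    ∀ (N : ℕ) (G : SimpleGraph V), G.edgeSet.ncard ≤ N → G.Connected →
      ∃ T : SimpleGraph V, T ≤ G ∧ T.IsTree := by
  classical
  intro N
  induction N with
  | zero =>
    intro G hcard hconn
    refine ⟨G, le_refl _, hconn, ?_⟩
    intro v c hc
    have hne : c.edges ≠ [] := by
      intro h
      have := hc.not_nil
      exact this (SimpleGraph.Walk.nil_iff_length_eq.mpr
        (by rw [← SimpleGraph.Walk.length_edges, h]; rfl))
    obtain ⟨e, he⟩ := List.exists_mem_of_ne_nil _ hne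
    have heG : e ∈ G.edgeSet := c.edges_subset_edgeSet he
    have := Set.ncard_pos (Set.toFinite G.edgeSet) |>.mpr ⟨e, heG⟩
    omega
  | succ N ih =>
    intro G hcard hconn
    by_cases hac : G.IsAcyclic
    · exact ⟨G, le_refl _, hconn, hac⟩
    · rw [SimpleGraph.IsAcyclic] at hac
      push_neg at hac
      obtain ⟨v, c, hc⟩ := hac
      have hne : c.edges ≠ [] := by
        intro h
        exact hc.not_nil (SimpleGraph.Walk.nil_iff_length_eq.mpr
          (by rw [← SimpleGraph.Walk.length_edges, h]; rfl))
      obtain ⟨e, he⟩ := List.exists_mem_of_ne_nil _ hne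
      induction e with
      | _ a b =>
        have hkey := (G.adj_and_reachable_delete_edges_iff_exists_cycle (v := a) (w := b)).mpr
          ⟨v, c, hc, he⟩
        obtain ⟨hadj, hre⟩ := hkey
        set G' := G \ fromEdgeSet {s(a, b)} with hG'
        have hconn' : G'.Connected := by
          rw [connected_iff]
          exact ⟨fun x y => reachable_delete_of_cycle_edge hre x y (hconn x y), hconn.nonempty⟩
        have hsub : G'.edgeSet ⊆ G.edgeSet :=
          SimpleGraph.edgeSet_subset_edgeSet.mpr sdiff_le
        have hnmem : s(a, b) ∉ G'.edgeSet := by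
          rw [mem_edgeSet, hG', sdiff_adj]
          exact fun h => h.2 ((fromEdgeSet_adj _).mpr ⟨rfl, hadj.ne⟩)
        have hlt : G'.edgeSet.ncard < G.edgeSet.ncard :=
          Set.ncard_lt_ncard ⟨hsub, fun hss => hnmem (hss hadj)⟩ (Set.toFinite _)
        obtain ⟨T, hle, hT⟩ := ih G' (by omega) hconn'
        exact ⟨T, hle.trans sdiff_le, hT⟩

lemma exists_steiner_tree {V : Type*} [Fintype V] {G : SimpleGraph V} (h : G.Connected)
    (S : Set V) : ∃ T : G.Subgraph, IsSteinerTree G S T := by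
  classical
  obtain ⟨T, hle, hT⟩ := exists_tree_le_aux (G.edgeSet.ncard) G (le_refl _) h
  refine ⟨SimpleGraph.toSubgraph T hle, ?_, ?_⟩
  · intro v _
    exact Set.mem_univ v
  · have φ : (SimpleGraph.toSubgraph T hle).coe ≃g T :=
      { toEquiv := Equiv.Set.univ V
        map_rel_iff' := by intro a b; rfl }
    constructor
    · exact (φ.connected_iff).mpr hT.isConnected
    · intro v c hc
      exact hT.IsAcyclic (c.map φ.toHom)
        ((SimpleGraph.Walk.map_isCycle_iff_of_injective φ.injective).mpr hc)

def lamSet {V : Type*} (G : SimpleGraph V) (S : Set V) : Set ℕ :=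
  {n | ∃ T : Fin n → G.Subgraph, (∀ i, IsSteinerTree G S (T i)) ∧
    ∀ i j, i ≠ j → (T i).edgeSet ∩ (T j).edgeSet = ∅}

lemma steinerLambda_eq {V : Type*} (G : SimpleGraph V) (S : Set V) :
    steinerLambda G S = sSup (lamSet G S) := rfl

lemma zero_mem_lamSet {V : Type*} (G : SimpleGraph V) (S : Set V) : 0 ∈ lamSet G S :=
  ⟨Fin.elim0, fun i => i.elim0, fun i => i.elim0⟩

lemma bddAbove_lamSet {V : Type*} [Fintype V] (G : SimpleGraph V) (S : Set V)
    (hS : ∃ u ∈ S, ∃ v ∈ S, u ≠ v) : BddAbove (lamSet G S) := by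
  classical
  refine ⟨Fintype.card (Sym2 V), fun m hm => ?_⟩
  obtain ⟨T, hT, hdisj⟩ := hm
  obtain ⟨u, hu, v, hv, huv⟩ := hS
  have hedge : ∀ i, ∃ e, e ∈ (T i).edgeSet := by
    intro i
    obtain ⟨hSv, htree⟩ := hT i
    have hr := htree.isConnected.preconnected ⟨u, hSv hu⟩ ⟨v, hSv hv⟩
    obtain ⟨w⟩ := hr
    have hnn : ¬ w.Nil := SimpleGraph.Walk.not_nil_of_ne (by
      intro hh
      exact huv (congrArg Subtype.val hh))
    refine ⟨(w.firstDart hnn).edge.map Subtype.val, ?_⟩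
    have h1 := (w.firstDart hnn).edge_mem
    rw [Subgraph.edgeSet_coe] at h1
    exact h1
  choose e he using hedge
  have hinj : Function.Injective e := by
    intro i j hij
    by_contra hne
    exact Set.eq_empty_iff_forall_notMem.mp (hdisj i j hne) (e i) ⟨he i, hij ▸ he j⟩
  calc m = Fintype.card (Fin m) := (Fintype.card_fin m).symm
  _ ≤ Fintype.card (Sym2 V) := Fintype.card_le_of_injective e hinj

lemma one_le_steinerLambda {V : Type*} [Fintype V] {G : SimpleGraph V} (hc : G.Connected)
    (S : Set V) (hS : ∃ u ∈ S, ∃ v ∈ S, u ≠ v) : 1 ≤ steinerLambda G S := by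
  obtain ⟨T, hT⟩ := exists_steiner_tree hc S
  have h1 : 1 ∈ lamSet G S :=
    ⟨fun _ => T, fun _ => hT, fun i j hij => absurd (Subsingleton.elim i j) hij⟩
  rw [steinerLambda_eq]
  exact le_csSup (bddAbove_lamSet G S hS) h1

lemma genLambda_le_steinerLambda {V : Type*} [Fintype V] {G : SimpleGraph V} {S : Finset V}
    {k : ℕ} (hS : S.card = k) : genLambda G k ≤ steinerLambda G ↑S := by
  rw [genLambda]
  split
  · exact Nat.sInf_le ⟨S, hS, rfl⟩
  · exact Nat.zero_le _

lemma two_elts_of_card {V : Type*} {S : Finset V} {k : ℕ} (hS : S.card = k) (hk : 2 ≤ k) :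
    ∃ u ∈ (↑S : Set V), ∃ v ∈ (↑S : Set V), u ≠ v := by
  obtain ⟨u, hu, v, hv, huv⟩ := Finset.one_lt_card.mp (by omega : 1 < S.card)
  exact ⟨u, hu, v, hv, huv⟩

lemma one_le_genLambda {V : Type*} [Fintype V] {G : SimpleGraph V} (hc : G.Connected)
    {k : ℕ} (hk2 : 2 ≤ k) (hkn : k ≤ Fintype.card V) : 1 ≤ genLambda G k := by
  rw [genLambda, if_pos hc]
  obtain ⟨S, -, hcard⟩ := Finset.exists_subset_card_eq
    (s := (Finset.univ : Finset V)) (n := k) (by simpa using hkn)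
  have hmem := Nat.sInf_mem (⟨steinerLambda G ↑S, S, hcard, rfl⟩ :
    {m | ∃ S : Finset V, S.card = k ∧ steinerLambda G ↑S = m}.Nonempty)
  obtain ⟨S₀, hS₀card, hS₀⟩ := hmem
  rw [← hS₀]
  exact one_le_steinerLambda hc _ (two_elts_of_card hS₀card hk2)

theorem stmt17 {V : Type*} [Fintype V] (G : SimpleGraph V) (n k : ℕ)
    (hn : Fintype.card V = n) (h2 : 2 ≤ n) (hk : 2 ≤ k) (hkn : k ≤ n) :
    1 ≤ genLambda G k + genLambda Gᶜ k ∧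
    genLambda G k + genLambda Gᶜ k ≤ n - (k + 1) / 2 := by
  classical
  have hkn' : k ≤ Fintype.card V := hn ▸ hkn
  have hnonempty : Nonempty V := Fintype.card_pos_iff.mp (by omega)
  constructor
  · by_cases hc : G.Connected
    · have := one_le_genLambda hc hk hkn'
      omega
    · have hcc := compl_connected_of_not_connected hc
      have := one_le_genLambda hcc hk hkn'
      omega
  · obtain ⟨S, -, hcard⟩ := Finset.exists_subset_card_eq
      (s := (Finset.univ : Finset V)) (n := k) (by simpa using hkn')
    have h2el := two_elts_of_card hcard hk
    have hG := genLambda_le_steinerLambda (G := G) hcard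
    have hG' := genLambda_le_steinerLambda (G := Gᶜ) hcard
    have t1 := Nat.sSup_mem ⟨0, zero_mem_lamSet G ↑S⟩ (bddAbove_lamSet G ↑S h2el)
    have t2 := Nat.sSup_mem ⟨0, zero_mem_lamSet Gᶜ ↑S⟩ (bddAbove_lamSet Gᶜ ↑S h2el)
    rw [← steinerLambda_eq] at t1 t2
    obtain ⟨T, hT, hTd⟩ := t1
    obtain ⟨U, hU, hUd⟩ := t2
    have hsum := count_main S hcard hk T U hT hU hTd hUd
    rw [hn] at hsum
    omega
end

section
/- For two connected graphs G and H on vertex sets of sizes n₁ and n₂, the spanning-tree packing number of the Cartesian product satisfies κ_{n₁n₂}(G □ H) ≥ κ_{n₁}(G) + κ_{n₂}(H) − 1, i.e., the maximum number of edge-disjoint spanning trees of G □ H is at least the sum of those of G and H minus one. -/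
open SimpleGraph
open scoped Classical

namespace Stmt19Aux

variable {V : Type*} {α : Type*} {β : Type*}

/-- adjacency-level edge-disjointness -/
def EDisj {γ : Type*} (X Y : SimpleGraph γ) : Prop := ∀ v w, X.Adj v w → ¬ Y.Adj v w

lemma EDisj.symm2 {γ : Type*} {X Y : SimpleGraph γ} (h : EDisj X Y) : EDisj Y X :=
  fun v w hy hx => h v w hx hy

lemma EDisj.mono_left {γ : Type*} {X X' Y : SimpleGraph γ} (hle : X' ≤ X) (h : EDisj X Y) :
    EDisj X' Y := fun v w hx => h v w (hle hx)

lemma EDisj.mono_right {γ : Type*} {X Y Y' : SimpleGraph γ} (hle : Y' ≤ Y) (h : EDisj X Y) :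
    EDisj X Y' := fun v w hx hy => h v w hx (hle hy)

lemma EDisj.sup_left {γ : Type*} {X X' Y : SimpleGraph γ} (h : EDisj X Y) (h' : EDisj X' Y) :
    EDisj (X ⊔ X') Y := by
  intro v w hx hy
  rw [sup_adj] at hx
  rcases hx with hx | hx
  exacts [h v w hx hy, h' v w hx hy]

lemma EDisj.sup_right {γ : Type*} {X Y Y' : SimpleGraph γ} (h : EDisj X Y) (h' : EDisj X Y') :
    EDisj X (Y ⊔ Y') := by
  intro v w hx hy
  rw [sup_adj] at hy
  rcases hy with hy | hy
  exacts [h v w hx hy, h' v w hx hy]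

/-- a family of `n` pairwise edge-disjoint connected spanning subgraphs -/
def STP (G : SimpleGraph V) (n : ℕ) : Prop :=
  ∃ f : Fin n → SimpleGraph V,
    (∀ i, f i ≤ G) ∧ (∀ i, (f i).Connected) ∧ ∀ i j, i ≠ j → EDisj (f i) (f j)

lemma STP.zero (G : SimpleGraph V) : STP G 0 :=
  ⟨fun i => i.elim0, fun i => i.elim0, fun i => i.elim0, fun i => i.elim0⟩

lemma STP.one {G : SimpleGraph V} (hG : G.Connected) : STP G 1 :=
  ⟨fun _ => G, fun _ => le_rfl, fun _ => hG, fun i j hij =>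
    absurd (Subsingleton.elim i j) hij⟩

lemma STP.mono {G : SimpleGraph V} {m n : ℕ} (h : STP G n) (hmn : m ≤ n) : STP G m := by
  obtain ⟨f, h1, h2, h3⟩ := h
  refine ⟨fun i => f (Fin.castLE hmn i), fun i => h1 _, fun i => h2 _, fun i j hij => h3 _ _ ?_⟩
  intro hc
  apply hij
  have := congrArg Fin.val hc
  simp only [Fin.coe_castLE] at this
  exact Fin.ext this

/-- every finite connected graph contains a tree (which is then necessarily spanning) -/
lemma exists_tree_le [Fintype V] {K : SimpleGraph V} (hK : K.Connected) :
    ∃ T, T ≤ K ∧ T.IsTree := by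
  classical
  suffices H : ∀ (n : ℕ) (K : SimpleGraph V), K.edgeSet.ncard ≤ n → K.Connected →
      ∃ T, T ≤ K ∧ T.IsTree from H _ K le_rfl hK
  intro n
  induction n with
  | zero =>
    intro K hn hK
    refine ⟨K, le_rfl, hK, ?_⟩
    intro v c hc
    have h3 := hc.three_le_length
    cases c with
    | nil => simp at h3
    | @cons _ w _ hadj q =>
      have hm : s(v, w) ∈ K.edgeSet := hadj
      have := (Set.ncard_pos K.edgeSet.toFinite).mpr (⟨_, hm⟩ : K.edgeSet.Nonempty)
      exact absurd (this.trans_le hn) (by omega)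
      
  | succ n ih =>
    intro K hn hK
    by_cases hac : K.IsAcyclic
    · exact ⟨K, le_rfl, hK, hac⟩
    · rw [IsAcyclic] at hac
      push_neg at hac
      obtain ⟨v, c, hc⟩ := hac
      have h3 := hc.three_le_length
      cases c with
      | nil => simp at h3
      | @cons _ w _ hadj q =>
        have hmem : s(v, w) ∈ (Walk.cons hadj q).edges := by simp
        have hreach : (K \ fromEdgeSet {s(v, w)}).Reachable v w :=
          (adj_and_reachable_delete_edges_iff_exists_cycle.mpr ⟨v, _, hc, hmem⟩).2
        set K' := K \ fromEdgeSet {s(v, w)} with hK'def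
        have hK'le : K' ≤ K := sdiff_le
        have hwalk : ∀ {x y : V}, K.Walk x y → K'.Reachable x y := by
          intro x y p
          induction p with
          | nil => exact Reachable.refl _
          | @cons a b c h q ihp =>
            refine Reachable.trans ?_ ihp
            by_cases heq : s(a, b) = s(v, w)
            · rw [Sym2.eq_iff] at heq
              rcases heq with ⟨rfl, rfl⟩ | ⟨rfl, rfl⟩
              · exact hreach
              · exact hreach.symm
            · refine Adj.reachable ?_
              rw [hK'def, sdiff_adj]
              refine ⟨h, ?_⟩
              rw [fromEdgeSet_adj]
              rintro ⟨hm, -⟩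
              exact heq (by simpa using hm)
        have hK'conn : K'.Connected := by
          rw [connected_iff]
          refine ⟨fun x y => ?_, hK.nonempty⟩
          obtain ⟨p⟩ := hK.preconnected x y
          exact hwalk p
        have h1' : s(v, w) ∈ K.edgeSet := hadj
        have h2' : s(v, w) ∉ K'.edgeSet := by
          rw [mem_edgeSet, hK'def, sdiff_adj]
          rintro ⟨hK1, hK2⟩
          exact hK2 (by rw [fromEdgeSet_adj]; exact ⟨rfl, hK1.ne⟩)
        have hcardlt : K'.edgeSet.ncard < K.edgeSet.ncard := by
          apply Set.ncard_lt_ncard _ K.edgeSet.toFinite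
          rw [Set.ssubset_iff_subset_ne]
          refine ⟨edgeSet_mono hK'le, fun heq => h2' ?_⟩
          rw [heq]; exact h1'
        obtain ⟨T, hT1, hT2⟩ := ih K' (by omega) hK'conn
        exact ⟨T, hT1.trans hK'le, hT2⟩

/-- counting: `n` edge-disjoint connected spanning subgraphs force `2n ≤ |V|` -/
lemma stp_two_mul_le [Fintype V] {G : SimpleGraph V} {n : ℕ}
    (h2 : 2 ≤ Fintype.card V) (h : STP G n) : 2 * n ≤ Fintype.card V := by
  obtain ⟨f, hle, hconn, hdisj⟩ := h
  choose T hTle hTtree using fun i => exists_tree_le (hconn i)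
  have hsub : ∀ i, (T i).edgeFinset ⊆ G.edgeFinset := fun i =>
    edgeFinset_mono ((hTle i).trans (hle i))
  have hcard : ∀ i, (T i).edgeFinset.card = Fintype.card V - 1 := by
    intro i
    have := (hTtree i).card_edgeFinset
    omega
  have hdisjT : ∀ (i : Fin n), ∀ j ∈ (Finset.univ : Finset (Fin n)), i ≠ j →
      Disjoint ((T i).edgeFinset) ((T j).edgeFinset) := by
    intro i j _ hij
    rw [Finset.disjoint_left]
    intro e hei hej
    induction e with
    | h x y =>
      rw [mem_edgeFinset, mem_edgeSet] at hei hej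
      exact hdisj i j hij x y (hTle i hei) (hTle j hej)
  have hsum : n * (Fintype.card V - 1) ≤ G.edgeFinset.card := by
    have hb : (Finset.univ.biUnion fun i : Fin n => (T i).edgeFinset).card
        = ∑ i : Fin n, (T i).edgeFinset.card := by
      apply Finset.card_biUnion
      intro i hi j hj hij
      exact hdisjT i j hj hij
    have hb2 : (Finset.univ.biUnion fun i : Fin n => (T i).edgeFinset) ⊆ G.edgeFinset := by
      intro e he
      rw [Finset.mem_biUnion] at he
      obtain ⟨i, -, he⟩ := he
      exact hsub i he
    calc n * (Fintype.card V - 1) = ∑ _i : Fin n, (Fintype.card V - 1) := by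
          simp [Finset.sum_const, Finset.card_univ, mul_comm]
      _ = ∑ i : Fin n, (T i).edgeFinset.card := by
          apply Finset.sum_congr rfl; intro i _; rw [hcard i]
      _ = _ := hb.symm
      _ ≤ G.edgeFinset.card := Finset.card_le_card hb2
  have hch : G.edgeFinset.card ≤ (Fintype.card V).choose 2 :=
    card_edgeFinset_le_card_choose_two
  rw [Nat.choose_two_right] at hch
  have key : n * (Fintype.card V - 1) * 2 ≤ Fintype.card V * (Fintype.card V - 1) := by
    have h1 : n * (Fintype.card V - 1) ≤ Fintype.card V * (Fintype.card V - 1) / 2 :=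
      le_trans hsum hch
    have h2' := Nat.mul_le_mul_right 2 h1
    calc n * (Fintype.card V - 1) * 2 ≤ Fintype.card V * (Fintype.card V - 1) / 2 * 2 := h2'
      _ ≤ Fintype.card V * (Fintype.card V - 1) := Nat.div_mul_le_self _ _
  have hpos : 0 < Fintype.card V - 1 := by omega
  have : 2 * n * (Fintype.card V - 1) ≤ Fintype.card V * (Fintype.card V - 1) := by
    calc 2 * n * (Fintype.card V - 1) = n * (Fintype.card V - 1) * 2 := by ring
      _ ≤ _ := key
  exact Nat.le_of_mul_le_mul_right this hpos

lemma stp_bddAbove [Fintype V] {G : SimpleGraph V} (h2 : 2 ≤ Fintype.card V) :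
    BddAbove {n | STP G n} := by
  refine ⟨Fintype.card V, fun n hn => ?_⟩
  have := stp_two_mul_le h2 hn
  omega



variable {α : Type*} {β : Type*}

/-- all copies of `K` in the rows indexed by `Y` -/
def rowFam (K : SimpleGraph α) (Y : Set β) : SimpleGraph (α × β) where
  Adj p q := p.2 = q.2 ∧ p.2 ∈ Y ∧ K.Adj p.1 q.1
  symm := by
    constructor
    rintro ⟨x, y⟩ ⟨x', y'⟩ ⟨h1, h2, h3⟩
    exact ⟨h1.symm, h1 ▸ h2, h3.symm⟩
  loopless := by
    constructor
    rintro ⟨x, y⟩ ⟨_, _, h⟩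
    exact K.loopless.irrefl _ h

/-- all copies of `K` in the columns indexed by `Xs` -/
def colFam (K : SimpleGraph β) (Xs : Set α) : SimpleGraph (α × β) where
  Adj p q := p.1 = q.1 ∧ p.1 ∈ Xs ∧ K.Adj p.2 q.2
  symm := by
    constructor
    rintro ⟨x, y⟩ ⟨x', y'⟩ ⟨h1, h2, h3⟩
    exact ⟨h1.symm, h1 ▸ h2, h3.symm⟩
  loopless := by
    constructor
    rintro ⟨x, y⟩ ⟨_, _, h⟩
    exact K.loopless.irrefl _ h

lemma rowFam_adj {K : SimpleGraph α} {Y : Set β} {p q : α × β} :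
    (rowFam K Y).Adj p q ↔ p.2 = q.2 ∧ p.2 ∈ Y ∧ K.Adj p.1 q.1 := Iff.rfl

lemma colFam_adj {K : SimpleGraph β} {Xs : Set α} {p q : α × β} :
    (colFam K Xs).Adj p q ↔ p.1 = q.1 ∧ p.1 ∈ Xs ∧ K.Adj p.2 q.2 := Iff.rfl

lemma rowFam_le {G : SimpleGraph α} (H : SimpleGraph β) {K : SimpleGraph α} (hK : K ≤ G)
    (Y : Set β) : rowFam K Y ≤ G □ H := by
  rintro ⟨x, y⟩ ⟨x', y'⟩ ⟨h1, _, h3⟩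
  exact boxProd_adj.mpr (Or.inl ⟨hK h3, h1⟩)

lemma colFam_le (G : SimpleGraph α) {H : SimpleGraph β} {K : SimpleGraph β} (hK : K ≤ H)
    (Xs : Set α) : colFam K Xs ≤ G □ H := by
  rintro ⟨x, y⟩ ⟨x', y'⟩ ⟨h1, _, h3⟩
  exact boxProd_adj.mpr (Or.inr ⟨hK h3, h1⟩)

lemma rowFam_reach {K : SimpleGraph α} {Y : Set β} {y : β} (hy : y ∈ Y) {u v : α}
    (h : K.Reachable u v) : (rowFam K Y).Reachable (u, y) (v, y) :=
  h.map (⟨fun x => (x, y), fun hadj => ⟨rfl, hy, hadj⟩⟩ : K →g rowFam K Y)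

lemma colFam_reach {K : SimpleGraph β} {Xs : Set α} {x : α} (hx : x ∈ Xs) {u v : β}
    (h : K.Reachable u v) : (colFam K Xs).Reachable (x, u) (x, v) :=
  h.map (⟨fun y => (x, y), fun hadj => ⟨rfl, hx, hadj⟩⟩ : K →g colFam K Xs)

lemma eDisj_rowFam_colFam {K : SimpleGraph α} {K' : SimpleGraph β} {Y : Set β} {Xs : Set α} :
    EDisj (rowFam K Y) (colFam K' Xs) := by
  rintro ⟨x, y⟩ ⟨x', y'⟩ ⟨_, _, h3⟩ ⟨g1, _, _⟩
  exact K.ne_of_adj h3 g1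

lemma eDisj_rowFam_rowFam_graph {K K' : SimpleGraph α} {Y Y' : Set β} (h : EDisj K K') :
    EDisj (rowFam K Y) (rowFam K' Y') := by
  rintro ⟨x, y⟩ ⟨x', y'⟩ ⟨_, _, h3⟩ ⟨_, _, g3⟩
  exact h _ _ h3 g3

lemma eDisj_rowFam_rowFam_sets {K K' : SimpleGraph α} {Y Y' : Set β}
    (h : ∀ y, y ∈ Y → y ∉ Y') : EDisj (rowFam K Y) (rowFam K' Y') := by
  rintro ⟨x, y⟩ ⟨x', y'⟩ ⟨_, h2, _⟩ ⟨_, g2, _⟩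
  exact h _ h2 g2

lemma eDisj_colFam_colFam_graph {K K' : SimpleGraph β} {Xs Xs' : Set α} (h : EDisj K K') :
    EDisj (colFam K Xs) (colFam K' Xs') := by
  rintro ⟨x, y⟩ ⟨x', y'⟩ ⟨_, _, h3⟩ ⟨_, _, g3⟩
  exact h _ _ h3 g3

lemma eDisj_colFam_colFam_sets {K K' : SimpleGraph β} {Xs Xs' : Set α}
    (h : ∀ x, x ∈ Xs → x ∉ Xs') : EDisj (colFam K Xs) (colFam K' Xs') := by
  rintro ⟨x, y⟩ ⟨x', y'⟩ ⟨_, h2, _⟩ ⟨_, g2, _⟩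
  exact h _ h2 g2

/-- connectivity pattern: full rows of a connected graph at every level, plus for every
edge of a connected graph on the level set some column copy. -/
lemma pattern_rows [Nonempty α] [Nonempty β] {C : SimpleGraph (α × β)}
    {KG : SimpleGraph α} {KH : SimpleGraph β} (hKG : KG.Connected) (hKH : KH.Connected)
    (hrow : ∀ (y : β) {u v : α}, KG.Adj u v → C.Adj (u, y) (v, y))
    (hcol : ∀ {u v : β}, KH.Adj u v → ∃ x, C.Adj (x, u) (x, v)) : C.Connected := by
  have hrowR : ∀ (y : β) (u v : α), C.Reachable (u, y) (v, y) := fun y u v =>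
    (hKG.preconnected u v).map (⟨fun x => (x, y), fun h => hrow y h⟩ : KG →g C)
  have key : ∀ (u v : β) (x : α), C.Reachable (x, u) (x, v) := by
    intro u v x
    obtain ⟨p⟩ := hKH.preconnected u v
    induction p generalizing x with
    | nil => exact Reachable.refl _
    | @cons a b c h q ihp =>
      obtain ⟨cc, hcc⟩ := hcol h
      exact ((hrowR a x cc).trans (hcc.reachable.trans (ihp cc))).trans (hrowR c cc x)
  rw [connected_iff]
  refine ⟨?_, inferInstance⟩
  rintro ⟨x, y⟩ ⟨x', y'⟩
  exact (hrowR y x x').trans (key y y' x')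

lemma pattern_cols [Nonempty α] [Nonempty β] {C : SimpleGraph (α × β)}
    {KG : SimpleGraph α} {KH : SimpleGraph β} (hKG : KG.Connected) (hKH : KH.Connected)
    (hcol : ∀ (x : α) {u v : β}, KH.Adj u v → C.Adj (x, u) (x, v))
    (hrow : ∀ {u v : α}, KG.Adj u v → ∃ y, C.Adj (u, y) (v, y)) : C.Connected := by
  have hcolR : ∀ (x : α) (u v : β), C.Reachable (x, u) (x, v) := fun x u v =>
    (hKH.preconnected u v).map (⟨fun y => (x, y), fun h => hcol x h⟩ : KH →g C)
  have key : ∀ (u v : α) (y : β), C.Reachable (u, y) (v, y) := by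
    intro u v y
    obtain ⟨p⟩ := hKG.preconnected u v
    induction p generalizing y with
    | nil => exact Reachable.refl _
    | @cons a b c h q ihp =>
      obtain ⟨cc, hcc⟩ := hrow h
      exact ((hcolR a y cc).trans (hcc.reachable.trans (ihp cc))).trans (hcolR c cc y)
  rw [connected_iff]
  refine ⟨?_, inferInstance⟩
  rintro ⟨x, y⟩ ⟨x', y'⟩
  exact (hcolR x y y').trans (key x x' y')

/-! ### parent machinery -/

variable {γ : Type*}

/-- a fixed neighbour one step closer to `v0` -/
noncomputable def par (K : SimpleGraph γ) (v0 x : γ) : γ :=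
  if h : ∃ y, K.Adj x y ∧ K.dist y v0 < K.dist x v0 then h.choose else x

lemma par_spec {K : SimpleGraph γ} (hK : K.Connected) {v0 x : γ} (hx : x ≠ v0) :
    K.Adj x (par K v0 x) ∧ K.dist (par K v0 x) v0 < K.dist x v0 := by
  have hex : ∃ y, K.Adj x y ∧ K.dist y v0 < K.dist x v0 := by
    obtain ⟨p, hp⟩ := (hK.preconnected x v0).exists_walk_length_eq_dist
    cases p with
    | nil => exact absurd rfl hx
    | @cons _ b _ h q =>
      refine ⟨b, h, ?_⟩
      have h1 : K.dist b v0 ≤ q.length := dist_le q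
      have h2 : q.length + 1 = K.dist x v0 := by simpa using hp
      omega
  rw [par, dif_pos hex]
  exact hex.choose_spec

/-- symmetrized "parent edge" graph, restricted to children in `r` -/
noncomputable def parGraph (K : SimpleGraph γ) (v0 : γ) (r : Set γ) : SimpleGraph γ where
  Adj x y := (x ≠ v0 ∧ x ∈ r ∧ y = par K v0 x ∧ y ≠ x) ∨
    (y ≠ v0 ∧ y ∈ r ∧ x = par K v0 y ∧ x ≠ y)
  symm := by
    constructor
    rintro x y (⟨h1, h2, h3, h4⟩ | ⟨h1, h2, h3, h4⟩)
    · exact Or.inr ⟨h1, h2, h3, h4⟩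
    · exact Or.inl ⟨h1, h2, h3, h4⟩
  loopless := by
    constructor
    rintro x (⟨_, _, _, h4⟩ | ⟨_, _, _, h4⟩) <;> exact h4 rfl

lemma parGraph_le {K : SimpleGraph γ} (hK : K.Connected) {v0 : γ} {r : Set γ} :
    parGraph K v0 r ≤ K := by
  rintro x y (⟨h1, _, h3, _⟩ | ⟨h1, _, h3, _⟩)
  · exact h3 ▸ (par_spec hK h1).1
  · exact (h3 ▸ (par_spec hK h1).1).symm

lemma parGraph_mono {K : SimpleGraph γ} {v0 : γ} {r r' : Set γ} (h : r ⊆ r') :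
    parGraph K v0 r ≤ parGraph K v0 r' := by
  rintro x y (⟨h1, h2, h3, h4⟩ | ⟨h1, h2, h3, h4⟩)
  · exact Or.inl ⟨h1, h h2, h3, h4⟩
  · exact Or.inr ⟨h1, h h2, h3, h4⟩

/-- the adjacency one actually uses: a vertex `x ∈ r`, `x ≠ v0` is joined to its parent -/
lemma parGraph_adj_par {K : SimpleGraph γ} (hK : K.Connected) {v0 x : γ} {r : Set γ}
    (hx : x ≠ v0) (hxr : x ∈ r) : (parGraph K v0 r).Adj x (par K v0 x) :=
  Or.inl ⟨hx, hxr, rfl, (par_spec hK hx).1.ne'⟩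

/-- a parent edge of a vertex in `s` is never a parent edge of a vertex in `r`
when `s` and `r` are disjoint -/
lemma not_parGraph_adj_par {K : SimpleGraph γ} (hK : K.Connected) {v0 x : γ} {r : Set γ}
    (hx : x ≠ v0) (hxr : x ∉ r) : ¬ (parGraph K v0 r).Adj x (par K v0 x) := by
  rintro (⟨h1, h2, h3, h4⟩ | ⟨h1, h2, h3, h4⟩)
  · exact hxr h2
  · -- par K v0 x ∈ r, and x = par K v0 (par K v0 x); contradiction on distances
    have d1 := (par_spec hK hx).2
    have d2 := (par_spec hK h1).2
    rw [← h3] at d2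
    omega

/-- the full parent graph is connected -/
lemma parGraph_univ_connected {K : SimpleGraph γ} (hK : K.Connected) (v0 : γ) :
    (parGraph K v0 Set.univ).Connected := by
  have key : ∀ (n : ℕ) (x : γ), K.dist x v0 = n → (parGraph K v0 Set.univ).Reachable x v0 := by
    intro n
    induction n using Nat.strong_induction_on with
    | _ n IH =>
      intro x hx
      by_cases hx0 : x = v0
      · exact hx0 ▸ Reachable.refl _
      · have hs := par_spec hK hx0
        have hadj := parGraph_adj_par hK hx0 (Set.mem_univ x)
        exact hadj.reachable.trans (IH _ (hx ▸ hs.2) _ rfl)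
  rw [connected_iff]
  exact ⟨fun x y => (key _ x rfl).trans (key _ y rfl).symm, hK.nonempty⟩


/-! ### gluing families -/

lemma stp_glue {V : Type*} {G' : SimpleGraph V} {n m : ℕ}
    (A : Fin n → SimpleGraph V) (B : Fin m → SimpleGraph V) (C : SimpleGraph V)
    (hAle : ∀ i, A i ≤ G') (hBle : ∀ j, B j ≤ G') (hCle : C ≤ G')
    (hAconn : ∀ i, (A i).Connected) (hBconn : ∀ j, (B j).Connected) (hCconn : C.Connected)
    (hAA : ∀ i j, i ≠ j → EDisj (A i) (A j))
    (hBB : ∀ i j, i ≠ j → EDisj (B i) (B j))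
    (hAB : ∀ i j, EDisj (A i) (B j))
    (hAC : ∀ i, EDisj (A i) C)
    (hBC : ∀ j, EDisj (B j) C) : STP G' (n + m + 1) := by
  refine ⟨fun i => if h : (i : ℕ) < n then A ⟨i, h⟩
    else if h' : (i : ℕ) < n + m then B ⟨(i : ℕ) - n, by omega⟩ else C, ?_, ?_, ?_⟩
  · intro i
    dsimp only
    split_ifs with h1 h2
    · exact hAle _
    · exact hBle _
    · exact hCle
  · intro i
    dsimp only
    split_ifs with h1 h2
    · exact hAconn _
    · exact hBconn _
    · exact hCconn
  · intro i j hij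
    dsimp only
    split_ifs with h1 h2 h3 h4 h5 h6 h7
    · refine hAA _ _ fun hc => hij ?_
      have := congrArg Fin.val hc
      simp only at this
      exact Fin.ext this
    · exact hAB _ _
    · exact hAC _
    · exact (hAB _ _).symm2
    · refine hBB _ _ fun hc => hij ?_
      have := congrArg Fin.val hc
      simp only at this
      have hi := i.isLt
      have hj := j.isLt
      exact Fin.ext (by omega)
    · exact hBC _
    · exact (hAC _).symm2
    · exact (hBC _).symm2
    · exfalso
      have hi := i.isLt
      have hj := j.isLt
      exact hij (Fin.ext (by omega))

/-! ### degenerate products -/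

lemma stp_box_left {α β : Type*} (G : SimpleGraph α) (H : SimpleGraph β)
    [Subsingleton α] [Nonempty α] {n : ℕ} (hH : STP H n) : STP (G □ H) n := by
  obtain ⟨S, hSle, hSconn, hSdisj⟩ := hH
  refine ⟨fun j => colFam (S j) Set.univ, fun j => colFam_le G (hSle j) _, fun j => ?_,
    fun i j hij => eDisj_colFam_colFam_graph (hSdisj i j hij)⟩
  rw [connected_iff]
  have hne : Nonempty β := (hSconn j).nonempty
  refine ⟨?_, inferInstance⟩
  rintro ⟨x, y⟩ ⟨x', y'⟩
  have hx : x = x' := Subsingleton.elim _ _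
  subst hx
  exact colFam_reach (Set.mem_univ x) ((hSconn j).preconnected y y')

lemma stp_box_right {α β : Type*} (G : SimpleGraph α) (H : SimpleGraph β)
    [Subsingleton β] [Nonempty β] {n : ℕ} (hG : STP G n) : STP (G □ H) n := by
  obtain ⟨T, hTle, hTconn, hTdisj⟩ := hG
  refine ⟨fun j => rowFam (T j) Set.univ, fun j => rowFam_le H (hTle j) _, fun j => ?_,
    fun i j hij => eDisj_rowFam_rowFam_graph (hTdisj i j hij)⟩
  rw [connected_iff]
  have hne : Nonempty α := (hTconn j).nonempty
  refine ⟨?_, inferInstance⟩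
  rintro ⟨x, y⟩ ⟨x', y'⟩
  have hy : y = y' := Subsingleton.elim _ _
  subst hy
  exact rowFam_reach (Set.mem_univ y) ((hTconn j).preconnected x x')

/-! ### the main construction -/

lemma stp_box {α β : Type*} [Fintype α] [Fintype β] {G : SimpleGraph α} {H : SimpleGraph β}
    {k l : ℕ} (hG : STP G (k + 1)) (hH : STP H (l + 1))
    (hk : 2 * k + 1 ≤ Fintype.card α) (hl : 2 * l + 1 ≤ Fintype.card β) :
    STP (G □ H) (k + l + 1) := by
  obtain ⟨T, hTle, hTconn, hTdisj⟩ := hG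
  obtain ⟨S, hSle, hSconn, hSdisj⟩ := hH
  obtain ⟨eX⟩ : Nonempty (Fin (2 * k + 1) ↪ α) :=
    Function.Embedding.nonempty_of_card_le (by simpa using hk)
  obtain ⟨eY⟩ : Nonempty (Fin (2 * l + 1) ↪ β) :=
    Function.Embedding.nonempty_of_card_le (by simpa using hl)
  set x0 : α := eX ⟨2 * k, by omega⟩ with hx0def
  set y0 : β := eY ⟨2 * l, by omega⟩ with hy0def
  set X : Fin k → α := fun i => eX ⟨i.1, by omega⟩ with hXdef
  set Z : Fin k → α := fun i => eX ⟨k + i.1, by omega⟩ with hZdef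
  set W : Fin l → β := fun j => eY ⟨j.1, by omega⟩ with hWdef
  set R : Fin l → β := fun j => eY ⟨l + j.1, by omega⟩ with hRdef
  set Ta : SimpleGraph α := T (Fin.last k) with hTadef
  set Sb : SimpleGraph β := S (Fin.last l) with hSbdef
  have hTa : Ta.Connected := hTconn _
  have hSb : Sb.Connected := hSconn _
  -- injectivity and distinctness facts
  have hXinj : Function.Injective X := by
    intro i j h
    have := congrArg Fin.val (eX.injective h)
    simp only at this
    exact Fin.ext this
  have hZinj : Function.Injective Z := by
    intro i j h
    have := congrArg Fin.val (eX.injective h)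
    simp only at this
    exact Fin.ext (by omega)
  have hWinj : Function.Injective W := by
    intro i j h
    have := congrArg Fin.val (eY.injective h)
    simp only at this
    exact Fin.ext this
  have hRinj : Function.Injective R := by
    intro i j h
    have := congrArg Fin.val (eY.injective h)
    simp only at this
    exact Fin.ext (by omega)
  have hXZ : ∀ i j, X i ≠ Z j := by
    intro i j h
    have := congrArg Fin.val (eX.injective h)
    simp only at this
    have := i.isLt
    omega
  have hWR : ∀ i j, W i ≠ R j := by
    intro i j h
    have := congrArg Fin.val (eY.injective h)
    simp only at this
    have := i.isLt
    omega
  have hx0X : ∀ i, X i ≠ x0 := by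
    intro i h
    have := congrArg Fin.val (eX.injective h)
    simp only at this
    have := i.isLt
    omega
  have hx0Z : ∀ i, Z i ≠ x0 := by
    intro i h
    have := congrArg Fin.val (eX.injective h)
    simp only at this
    have := i.isLt
    omega
  have hy0W : ∀ j, W j ≠ y0 := by
    intro j h
    have := congrArg Fin.val (eY.injective h)
    simp only at this
    have := j.isLt
    omega
  have hy0R : ∀ j, R j ≠ y0 := by
    intro j h
    have := congrArg Fin.val (eY.injective h)
    simp only at this
    have := j.isLt
    omega
  have hx0notin : x0 ∉ Set.range X ∪ Set.range Z := by
    rintro (⟨i, hi⟩ | ⟨i, hi⟩)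
    exacts [hx0X i hi, hx0Z i hi]
  have hy0notin : y0 ∉ Set.range W ∪ Set.range R := by
    rintro (⟨j, hj⟩ | ⟨j, hj⟩)
    exacts [hy0W j hj, hy0R j hj]
  have hXnotZ : ∀ x, x ∈ Set.range X → x ∉ Set.range Z := by
    rintro x ⟨i, rfl⟩ ⟨j, hj⟩
    exact hXZ i j hj.symm
  have hWnotR : ∀ y, y ∈ Set.range W → y ∉ Set.range R := by
    rintro y ⟨i, rfl⟩ ⟨j, hj⟩
    exact hWR i j hj.symm
  -- auxiliary graphs
  set PH : SimpleGraph β := parGraph Sb y0 Set.univ with hPHdef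
  set PW : SimpleGraph β := parGraph Sb y0 (Set.range W) with hPWdef
  set PnW : SimpleGraph β := PH \ PW with hPnWdef
  set QZ : SimpleGraph α := parGraph Ta x0 (Set.range Z) with hQZdef
  set TaNZ : SimpleGraph α := Ta \ QZ with hTaNZdef
  have hPHle : PH ≤ Sb := parGraph_le hSb
  have hPWle : PW ≤ Sb := parGraph_le hSb
  have hPnWle : PnW ≤ PH := sdiff_le
  have hQZle : QZ ≤ Ta := parGraph_le hTa
  have hTaNZle : TaNZ ≤ Ta := sdiff_le
  have ePnWPW : EDisj PnW PW := by
    intro v w h h'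
    exact h.2 h'
  have eTaNZQZ : EDisj TaNZ QZ := by
    intro v w h h'
    exact h.2 h'
  have eTT : ∀ i : Fin k, EDisj (T i.castSucc) Ta :=
    fun i => hTdisj _ _ (Fin.castSucc_lt_last i).ne
  have eSS : ∀ j : Fin l, EDisj (S j.castSucc) Sb :=
    fun j => hSdisj _ _ (Fin.castSucc_lt_last j).ne
  -- the three families
  set A : Fin k → SimpleGraph (α × β) := fun i =>
    rowFam (T i.castSucc) Set.univ ⊔ colFam PnW {X i} ⊔ colFam PW {Z i} with hAdef
  set B : Fin l → SimpleGraph (α × β) := fun j =>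
    colFam (S j.castSucc) Set.univ ⊔ rowFam TaNZ {W j} ⊔ rowFam QZ {R j} with hBdef
  set C : SimpleGraph (α × β) :=
    rowFam Ta ((Set.range W ∪ Set.range R)ᶜ) ⊔ rowFam QZ (Set.range W) ⊔
      rowFam TaNZ (Set.range R) ⊔ colFam Sb ((Set.range X ∪ Set.range Z)ᶜ) ⊔
      colFam PW (Set.range X) ⊔ colFam PnW (Set.range Z) with hCdef
  -- component inclusions in A, B, C
  have hA1 : ∀ i, rowFam (T i.castSucc) Set.univ ≤ A i := fun i => le_sup_left.trans le_sup_left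
  have hA2 : ∀ i, colFam PnW {X i} ≤ A i := fun i => le_sup_right.trans le_sup_left
  have hA3 : ∀ i, colFam PW {Z i} ≤ A i := fun i => le_sup_right
  have hB1 : ∀ j, colFam (S j.castSucc) Set.univ ≤ B j := fun j => le_sup_left.trans le_sup_left
  have hB2 : ∀ j, rowFam TaNZ {W j} ≤ B j := fun j => le_sup_right.trans le_sup_left
  have hB3 : ∀ j, rowFam QZ {R j} ≤ B j := fun j => le_sup_right
  have hc1 : rowFam Ta ((Set.range W ∪ Set.range R)ᶜ) ≤ C :=
    ((((le_sup_left.trans le_sup_left).trans le_sup_left).trans le_sup_left).trans le_sup_left)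
  have hc2 : rowFam QZ (Set.range W) ≤ C :=
    (((le_sup_right.trans le_sup_left).trans le_sup_left).trans le_sup_left).trans le_sup_left
  have hc3 : rowFam TaNZ (Set.range R) ≤ C :=
    ((le_sup_right.trans le_sup_left).trans le_sup_left).trans le_sup_left
  have hc4 : colFam Sb ((Set.range X ∪ Set.range Z)ᶜ) ≤ C :=
    (le_sup_right.trans le_sup_left).trans le_sup_left
  have hc5 : colFam PW (Set.range X) ≤ C := le_sup_right.trans le_sup_left
  have hc6 : colFam PnW (Set.range Z) ≤ C := le_sup_right
  -- subgraph bounds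
  have hAle : ∀ i, A i ≤ G □ H := by
    intro i
    refine sup_le (sup_le ?_ ?_) ?_
    · exact rowFam_le H (hTle _) _
    · exact colFam_le G ((hPnWle.trans hPHle).trans (hSle _)) _
    · exact colFam_le G (hPWle.trans (hSle _)) _
  have hBle : ∀ j, B j ≤ G □ H := by
    intro j
    refine sup_le (sup_le ?_ ?_) ?_
    · exact colFam_le G (hSle _) _
    · exact rowFam_le H (hTaNZle.trans (hTle _)) _
    · exact rowFam_le H (hQZle.trans (hTle _)) _
  have hCle : C ≤ G □ H := by
    refine sup_le (sup_le (sup_le (sup_le (sup_le ?_ ?_) ?_) ?_) ?_) ?_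
    · exact rowFam_le H (hTle _) _
    · exact rowFam_le H (hQZle.trans (hTle _)) _
    · exact rowFam_le H (hTaNZle.trans (hTle _)) _
    · exact colFam_le G (hSle _) _
    · exact colFam_le G (hPWle.trans (hSle _)) _
    · exact colFam_le G ((hPnWle.trans hPHle).trans (hSle _)) _
  -- connectivity of the A's
  haveI : Nonempty α := ⟨x0⟩
  haveI : Nonempty β := ⟨y0⟩
  have hPHconn : PH.Connected := parGraph_univ_connected hSb y0
  have hAconn : ∀ i, (A i).Connected := by
    intro i
    refine pattern_rows (hTconn i.castSucc) hPHconn ?_ ?_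
    · intro y u v huv
      exact hA1 i ⟨rfl, Set.mem_univ _, huv⟩
    · intro u v huv
      by_cases hw : PW.Adj u v
      · exact ⟨Z i, hA3 i ⟨rfl, rfl, hw⟩⟩
      · exact ⟨X i, hA2 i ⟨rfl, rfl, ⟨huv, hw⟩⟩⟩
  have hBconn : ∀ j, (B j).Connected := by
    intro j
    refine pattern_cols hTa (hSconn j.castSucc) ?_ ?_
    · intro x u v huv
      exact hB1 j ⟨rfl, Set.mem_univ _, huv⟩
    · intro u v huv
      by_cases hz : QZ.Adj u v
      · exact ⟨R j, hB3 j ⟨rfl, rfl, hz⟩⟩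
      · exact ⟨W j, hB2 j ⟨rfl, rfl, ⟨huv, hz⟩⟩⟩
  -- connectivity of C
  have hCreach : ∀ (n : ℕ) (x : α) (y : β), Ta.dist x x0 + Sb.dist y y0 = n →
      C.Reachable (x, y) (x0, y0) := by
    intro n
    induction n using Nat.strong_induction_on with
    | _ n IH =>
      intro x y hxy
      by_cases hy : y ∈ Set.range W ∪ Set.range R
      · have hyne : y ≠ y0 := fun h => hy0notin (h ▸ hy)
        by_cases hx : x ∈ Set.range X ∪ Set.range Z
        · have hxne : x ≠ x0 := fun h => hx0notin (h ▸ hx)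
          rcases hy with hyW | hyR
          · rcases hx with hxX | hxZ
            · have hadj : C.Adj (x, y) (x, par Sb y0 y) :=
                hc5 ⟨rfl, hxX, parGraph_adj_par hSb hyne hyW⟩
              refine hadj.reachable.trans
                (IH (Ta.dist x x0 + Sb.dist (par Sb y0 y) y0) ?_ x _ rfl)
              have := (par_spec hSb hyne).2
              omega
            · have hadj : C.Adj (x, y) (par Ta x0 x, y) :=
                hc2 ⟨rfl, hyW, parGraph_adj_par hTa hxne hxZ⟩
              refine hadj.reachable.trans
                (IH (Ta.dist (par Ta x0 x) x0 + Sb.dist y y0) ?_ _ y rfl)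
              have := (par_spec hTa hxne).2
              omega
          · rcases hx with hxX | hxZ
            · have hnz : ¬ QZ.Adj x (par Ta x0 x) :=
                not_parGraph_adj_par hTa hxne (hXnotZ x hxX)
              have hadj : C.Adj (x, y) (par Ta x0 x, y) :=
                hc3 ⟨rfl, hyR, ⟨(par_spec hTa hxne).1, hnz⟩⟩
              refine hadj.reachable.trans
                (IH (Ta.dist (par Ta x0 x) x0 + Sb.dist y y0) ?_ _ y rfl)
              have := (par_spec hTa hxne).2
              omega
            · have hyNotW : y ∉ Set.range W := fun hw => hWnotR y hw hyR
              have hnw : ¬ PW.Adj y (par Sb y0 y) :=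
                not_parGraph_adj_par hSb hyne hyNotW
              have hadj : C.Adj (x, y) (x, par Sb y0 y) :=
                hc6 ⟨rfl, hxZ, ⟨parGraph_adj_par hSb hyne (Set.mem_univ y), hnw⟩⟩
              refine hadj.reachable.trans
                (IH (Ta.dist x x0 + Sb.dist (par Sb y0 y) y0) ?_ x _ rfl)
              have := (par_spec hSb hyne).2
              omega
        · have r1 : C.Reachable (x, y) (x, y0) :=
            (colFam_reach (show x ∈ (Set.range X ∪ Set.range Z)ᶜ from hx)
              (hSb.preconnected y y0)).mono hc4
          have r2 : C.Reachable (x, y0) (x0, y0) :=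
            (rowFam_reach (show y0 ∈ (Set.range W ∪ Set.range R)ᶜ from hy0notin)
              (hTa.preconnected x x0)).mono hc1
          exact r1.trans r2
      · have r1 : C.Reachable (x, y) (x0, y) :=
          (rowFam_reach (show y ∈ (Set.range W ∪ Set.range R)ᶜ from hy)
            (hTa.preconnected x x0)).mono hc1
        have r2 : C.Reachable (x0, y) (x0, y0) :=
          (colFam_reach (show x0 ∈ (Set.range X ∪ Set.range Z)ᶜ from hx0notin)
            (hSb.preconnected y y0)).mono hc4
        exact r1.trans r2
  have hCconn : C.Connected := by
    rw [connected_iff]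
    refine ⟨?_, ⟨(x0, y0)⟩⟩
    rintro ⟨x, y⟩ ⟨x', y'⟩
    exact (hCreach _ x y rfl).trans (hCreach _ x' y' rfl).symm
  -- pairwise edge-disjointness
  have hAA : ∀ i j, i ≠ j → EDisj (A i) (A j) := by
    intro i j hij
    have hTij : EDisj (T i.castSucc) (T j.castSucc) :=
      hTdisj _ _ fun h => hij (Fin.castSucc_injective _ h)
    refine EDisj.sup_left (EDisj.sup_left ?_ ?_) ?_
    · refine EDisj.sup_right (EDisj.sup_right ?_ ?_) ?_
      · exact eDisj_rowFam_rowFam_graph hTij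
      · exact eDisj_rowFam_colFam
      · exact eDisj_rowFam_colFam
    · refine EDisj.sup_right (EDisj.sup_right ?_ ?_) ?_
      · exact eDisj_rowFam_colFam.symm2
      · exact eDisj_colFam_colFam_sets (by
          intro a ha hb
          rw [Set.mem_singleton_iff] at ha hb
          subst ha
          exact hij (hXinj hb))
      · exact eDisj_colFam_colFam_graph ePnWPW
    · refine EDisj.sup_right (EDisj.sup_right ?_ ?_) ?_
      · exact eDisj_rowFam_colFam.symm2
      · exact eDisj_colFam_colFam_graph ePnWPW.symm2
      · exact eDisj_colFam_colFam_sets (by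
          intro a ha hb
          rw [Set.mem_singleton_iff] at ha hb
          subst ha
          exact hij (hZinj hb))
  have hBB : ∀ i j, i ≠ j → EDisj (B i) (B j) := by
    intro i j hij
    have hSij : EDisj (S i.castSucc) (S j.castSucc) :=
      hSdisj _ _ fun h => hij (Fin.castSucc_injective _ h)
    refine EDisj.sup_left (EDisj.sup_left ?_ ?_) ?_
    · refine EDisj.sup_right (EDisj.sup_right ?_ ?_) ?_
      · exact eDisj_colFam_colFam_graph hSij
      · exact eDisj_rowFam_colFam.symm2
      · exact eDisj_rowFam_colFam.symm2
    · refine EDisj.sup_right (EDisj.sup_right ?_ ?_) ?_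
      · exact eDisj_rowFam_colFam
      · exact eDisj_rowFam_rowFam_sets (by
          intro a ha hb
          rw [Set.mem_singleton_iff] at ha hb
          subst ha
          exact hij (hWinj hb))
      · exact eDisj_rowFam_rowFam_graph eTaNZQZ
    · refine EDisj.sup_right (EDisj.sup_right ?_ ?_) ?_
      · exact eDisj_rowFam_colFam
      · exact eDisj_rowFam_rowFam_graph eTaNZQZ.symm2
      · exact eDisj_rowFam_rowFam_sets (by
          intro a ha hb
          rw [Set.mem_singleton_iff] at ha hb
          subst ha
          exact hij (hRinj hb))
  have hAB : ∀ i j, EDisj (A i) (B j) := by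
    intro i j
    refine EDisj.sup_left (EDisj.sup_left ?_ ?_) ?_
    · refine EDisj.sup_right (EDisj.sup_right ?_ ?_) ?_
      · exact eDisj_rowFam_colFam
      · exact eDisj_rowFam_rowFam_graph ((eTT i).mono_right hTaNZle)
      · exact eDisj_rowFam_rowFam_graph ((eTT i).mono_right hQZle)
    · refine EDisj.sup_right (EDisj.sup_right ?_ ?_) ?_
      · exact eDisj_colFam_colFam_graph (((eSS j).symm2).mono_left (hPnWle.trans hPHle))
      · exact eDisj_rowFam_colFam.symm2
      · exact eDisj_rowFam_colFam.symm2
    · refine EDisj.sup_right (EDisj.sup_right ?_ ?_) ?_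
      · exact eDisj_colFam_colFam_graph (((eSS j).symm2).mono_left hPWle)
      · exact eDisj_rowFam_colFam.symm2
      · exact eDisj_rowFam_colFam.symm2
  have hAC : ∀ i, EDisj (A i) C := by
    intro i
    refine EDisj.sup_left (EDisj.sup_left ?_ ?_) ?_
    · refine EDisj.sup_right (EDisj.sup_right (EDisj.sup_right (EDisj.sup_right
        (EDisj.sup_right ?_ ?_) ?_) ?_) ?_) ?_
      · exact eDisj_rowFam_rowFam_graph (eTT i)
      · exact eDisj_rowFam_rowFam_graph ((eTT i).mono_right hQZle)
      · exact eDisj_rowFam_rowFam_graph ((eTT i).mono_right hTaNZle)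
      · exact eDisj_rowFam_colFam
      · exact eDisj_rowFam_colFam
      · exact eDisj_rowFam_colFam
    · refine EDisj.sup_right (EDisj.sup_right (EDisj.sup_right (EDisj.sup_right
        (EDisj.sup_right ?_ ?_) ?_) ?_) ?_) ?_
      · exact eDisj_rowFam_colFam.symm2
      · exact eDisj_rowFam_colFam.symm2
      · exact eDisj_rowFam_colFam.symm2
      · exact eDisj_colFam_colFam_sets (by
          intro a ha hmem
          rw [Set.mem_singleton_iff] at ha
          subst ha
          exact hmem (Or.inl ⟨i, rfl⟩))
      · exact eDisj_colFam_colFam_graph ePnWPW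
      · exact eDisj_colFam_colFam_sets (by
          intro a ha hmem
          rw [Set.mem_singleton_iff] at ha
          subst ha
          exact hXnotZ _ ⟨i, rfl⟩ hmem)
    · refine EDisj.sup_right (EDisj.sup_right (EDisj.sup_right (EDisj.sup_right
        (EDisj.sup_right ?_ ?_) ?_) ?_) ?_) ?_
      · exact eDisj_rowFam_colFam.symm2
      · exact eDisj_rowFam_colFam.symm2
      · exact eDisj_rowFam_colFam.symm2
      · exact eDisj_colFam_colFam_sets (by
          intro a ha hmem
          rw [Set.mem_singleton_iff] at ha
          subst ha
          exact hmem (Or.inr ⟨i, rfl⟩))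
      · exact eDisj_colFam_colFam_sets (by
          intro a ha hmem
          rw [Set.mem_singleton_iff] at ha
          subst ha
          exact hXnotZ _ hmem ⟨i, rfl⟩)
      · exact eDisj_colFam_colFam_graph ePnWPW.symm2
  have hBC : ∀ j, EDisj (B j) C := by
    intro j
    refine EDisj.sup_left (EDisj.sup_left ?_ ?_) ?_
    · refine EDisj.sup_right (EDisj.sup_right (EDisj.sup_right (EDisj.sup_right
        (EDisj.sup_right ?_ ?_) ?_) ?_) ?_) ?_
      · exact eDisj_rowFam_colFam.symm2
      · exact eDisj_rowFam_colFam.symm2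
      · exact eDisj_rowFam_colFam.symm2
      · exact eDisj_colFam_colFam_graph (eSS j)
      · exact eDisj_colFam_colFam_graph ((eSS j).mono_right hPWle)
      · exact eDisj_colFam_colFam_graph ((eSS j).mono_right (hPnWle.trans hPHle))
    · refine EDisj.sup_right (EDisj.sup_right (EDisj.sup_right (EDisj.sup_right
        (EDisj.sup_right ?_ ?_) ?_) ?_) ?_) ?_
      · exact eDisj_rowFam_rowFam_sets (by
          intro a ha hmem
          rw [Set.mem_singleton_iff] at ha
          subst ha
          exact hmem (Or.inl ⟨j, rfl⟩))
      · exact eDisj_rowFam_rowFam_graph eTaNZQZ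
      · exact eDisj_rowFam_rowFam_sets (by
          intro a ha hmem
          rw [Set.mem_singleton_iff] at ha
          subst ha
          exact hWnotR _ ⟨j, rfl⟩ hmem)
      · exact eDisj_rowFam_colFam
      · exact eDisj_rowFam_colFam
      · exact eDisj_rowFam_colFam
    · refine EDisj.sup_right (EDisj.sup_right (EDisj.sup_right (EDisj.sup_right
        (EDisj.sup_right ?_ ?_) ?_) ?_) ?_) ?_
      · exact eDisj_rowFam_rowFam_sets (by
          intro a ha hmem
          rw [Set.mem_singleton_iff] at ha
          subst ha
          exact hmem (Or.inr ⟨j, rfl⟩))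
      · exact eDisj_rowFam_rowFam_sets (by
          intro a ha hmem
          rw [Set.mem_singleton_iff] at ha
          subst ha
          exact hWnotR _ hmem ⟨j, rfl⟩)
      · exact eDisj_rowFam_rowFam_graph eTaNZQZ.symm2
      · exact eDisj_rowFam_colFam
      · exact eDisj_rowFam_colFam
      · exact eDisj_rowFam_colFam
  exact stp_glue A B C hAle hBle hCle hAconn hBconn hCconn hAA hBB hAB hAC hBC


/-! ### interface with `steinerKappa` -/

lemma toSubgraph_coe_isTree {V : Type*} {G T' : SimpleGraph V} (hle : T' ≤ G)
    (ht : T'.IsTree) : (SimpleGraph.toSubgraph T' hle).coe.IsTree := by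
  constructor
  · rw [connected_iff]
    constructor
    · rintro ⟨a, ha⟩ ⟨b, hb⟩
      have hr : T'.Reachable a b := ht.isConnected.preconnected a b
      exact hr.map (⟨fun v => ⟨v, Set.mem_univ v⟩, fun h => h⟩ : T' →g (SimpleGraph.toSubgraph T' hle).coe)
    · obtain ⟨a⟩ := ht.isConnected.nonempty
      exact ⟨⟨a, Set.mem_univ a⟩⟩
  · intro v c hc
    have hinj : Function.Injective (fun x : (SimpleGraph.toSubgraph T' hle).verts => (x : V)) :=
      Subtype.val_injective
    exact ht.IsAcyclic
      (c.map (⟨fun x => (x : V), fun h => h⟩ : (SimpleGraph.toSubgraph T' hle).coe →g T'))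
      (hc.map hinj)

lemma spanningCoe_connected_of_verts_univ {V : Type*} {G : SimpleGraph V} {T : G.Subgraph}
    (hv : T.verts = Set.univ) (hc : T.coe.Connected) : T.spanningCoe.Connected := by
  rw [connected_iff]
  constructor
  · intro a b
    have ha : a ∈ T.verts := hv ▸ Set.mem_univ a
    have hb : b ∈ T.verts := hv ▸ Set.mem_univ b
    have hr : T.coe.Reachable ⟨a, ha⟩ ⟨b, hb⟩ := hc.preconnected _ _
    exact hr.map (⟨fun x => (x : V), fun h => h⟩ : T.coe →g T.spanningCoe)
  · obtain ⟨⟨a, _⟩⟩ := hc.nonempty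
    exact ⟨a⟩

lemma steinerKappa_univ_eq {V : Type*} [Fintype V] (G : SimpleGraph V) :
    steinerKappa G ↑(Finset.univ : Finset V) = sSup {n | STP G n} := by
  have hset : {n | ∃ T : Fin n → G.Subgraph,
      (∀ i, IsSteinerTree G (↑(Finset.univ : Finset V)) (T i)) ∧
      ∀ i j, i ≠ j → (T i).edgeSet ∩ (T j).edgeSet = ∅ ∧
        (T i).verts ∩ (T j).verts = ↑(Finset.univ : Finset V)} = {n | STP G n} := by
    ext n
    simp only [Set.mem_setOf_eq]
    constructor
    · rintro ⟨T, hT, hdisj⟩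
      refine ⟨fun i => (T i).spanningCoe, fun i => Subgraph.spanningCoe_le _, fun i => ?_, ?_⟩
      · have hv : (T i).verts = Set.univ := by
          have h1 := (hT i).1
          rw [Finset.coe_univ] at h1
          exact Set.eq_univ_of_univ_subset h1
        exact spanningCoe_connected_of_verts_univ hv (hT i).2.isConnected
      · intro i j hij v w hvw hvw'
        have h1 : s(v, w) ∈ (T i).edgeSet := Subgraph.mem_edgeSet.mpr hvw
        have h2 : s(v, w) ∈ (T j).edgeSet := Subgraph.mem_edgeSet.mpr hvw'
        have hmem : s(v, w) ∈ (T i).edgeSet ∩ (T j).edgeSet := ⟨h1, h2⟩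
        rw [(hdisj i j hij).1] at hmem
        exact hmem
    · rintro ⟨f, hle, hconn, hdisj⟩
      choose Tr hTrle hTrtree using fun i => exists_tree_le (hconn i)
      refine ⟨fun i => SimpleGraph.toSubgraph (Tr i) ((hTrle i).trans (hle i)), fun i => ?_,
        fun i j hij => ⟨?_, ?_⟩⟩
      · refine ⟨fun x _ => Set.mem_univ x, ?_⟩
        exact toSubgraph_coe_isTree _ (hTrtree i)
      · ext e
        simp only [Set.mem_inter_iff, Set.mem_empty_iff_false, iff_false]
        induction e with
        | h v w =>
          rintro ⟨h1, h2⟩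
          rw [Subgraph.mem_edgeSet] at h1 h2
          exact hdisj i j hij v w (hTrle i h1) (hTrle j h2)
      · show (Set.univ : Set V) ∩ Set.univ = ↑(Finset.univ : Finset V)
        simp
  rw [steinerKappa, hset]

lemma genKappa_eq_sSup {V : Type*} [Fintype V] {G : SimpleGraph V} (hG : G.Connected) :
    genKappa G (Fintype.card V) = sSup {n | STP G n} := by
  rw [genKappa, if_pos hG]
  have hset : {m | ∃ S : Finset V, S.card = Fintype.card V ∧ steinerKappa G ↑S = m} =
      {sSup {n | STP G n}} := by
    ext m
    simp only [Set.mem_setOf_eq, Set.mem_singleton_iff]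
    constructor
    · rintro ⟨Sf, hcard, rfl⟩
      rw [Finset.eq_univ_of_card Sf hcard]
      exact steinerKappa_univ_eq G
    · rintro rfl
      exact ⟨Finset.univ, Finset.card_univ, steinerKappa_univ_eq G⟩
  rw [hset, csInf_singleton]

lemma sSup_stp_card_le_one {V : Type*} [Fintype V] {G : SimpleGraph V}
    (h1 : Fintype.card V ≤ 1) (hG : G.Connected) : sSup {n | STP G n} = 0 := by
  haveI : Subsingleton V := Fintype.card_le_one_iff_subsingleton.mp h1
  have hbot : (⊥ : SimpleGraph V).Connected := by
    rw [connected_iff]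
    refine ⟨fun a b => ?_, hG.nonempty⟩
    rw [Subsingleton.elim a b]
  have hall : {n | STP G n} = Set.univ := by
    ext n
    simp only [Set.mem_setOf_eq, Set.mem_univ, iff_true]
    refine ⟨fun _ => ⊥, fun _ => bot_le, fun _ => hbot, fun i j _ v w h => ?_⟩
    simp at h
  rw [hall]
  have hnb : ¬ BddAbove (Set.univ : Set ℕ) := by
    rintro ⟨u, hu⟩
    have := hu (Set.mem_univ (u + 1))
    omega
  rw [csSup_of_not_bddAbove hnb, csSup_empty]
  rfl

end Stmt19Aux

theorem stmt19_aux {α β : Type*} [Fintype α] [Fintype β] (G : SimpleGraph α) (H : SimpleGraph β)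
    (hG : G.Connected) (hH : H.Connected) :
    genKappa G (Fintype.card α) + genKappa H (Fintype.card β) - 1 ≤
      genKappa (G □ H) (Fintype.card (α × β)) := by
  classical
  have hGH : (G □ H).Connected := connected_boxProd.mpr ⟨hG, hH⟩
  rw [Stmt19Aux.genKappa_eq_sSup hG, Stmt19Aux.genKappa_eq_sSup hH,
    Stmt19Aux.genKappa_eq_sSup hGH]
  haveI : Nonempty α := hG.nonempty
  haveI : Nonempty β := hH.nonempty
  have hca : 1 ≤ Fintype.card α := Fintype.card_pos
  have hcb : 1 ≤ Fintype.card β := Fintype.card_pos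
  by_cases ha1 : Fintype.card α ≤ 1
  · rw [Stmt19Aux.sSup_stp_card_le_one ha1 hG]
    by_cases hb1 : Fintype.card β ≤ 1
    · rw [Stmt19Aux.sSup_stp_card_le_one hb1 hH]
      simp
    · have hb2 : 2 ≤ Fintype.card β := by omega
      have hbdd := Stmt19Aux.stp_bddAbove (G := H) hb2
      have hmem := Nat.sSup_mem ⟨0, Set.mem_setOf_eq ▸ Stmt19Aux.STP.zero H⟩ hbdd
      have h1le : 1 ≤ sSup {n | Stmt19Aux.STP H n} := le_csSup hbdd (Stmt19Aux.STP.one hH)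
      obtain ⟨l, hl⟩ : ∃ l, sSup {n | Stmt19Aux.STP H n} = l + 1 :=
        ⟨sSup {n | Stmt19Aux.STP H n} - 1, by omega⟩
      have hstp : Stmt19Aux.STP H (l + 1) := by rw [← hl]; exact hmem
      haveI : Subsingleton α := Fintype.card_le_one_iff_subsingleton.mp ha1
      have hprod : Stmt19Aux.STP (G □ H) (l + 1) := Stmt19Aux.stp_box_left G H hstp
      have hbddP : BddAbove {n | Stmt19Aux.STP (G □ H) n} := by
        apply Stmt19Aux.stp_bddAbove
        rw [Fintype.card_prod]
        calc 2 ≤ Fintype.card β := hb2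
          _ = 1 * Fintype.card β := (one_mul _).symm
          _ ≤ Fintype.card α * Fintype.card β := Nat.mul_le_mul_right _ hca
      have hfin : l + 1 ≤ sSup {n | Stmt19Aux.STP (G □ H) n} := le_csSup hbddP hprod
      rw [hl]
      omega
  · have ha2 : 2 ≤ Fintype.card α := by omega
    by_cases hb1 : Fintype.card β ≤ 1
    · rw [Stmt19Aux.sSup_stp_card_le_one hb1 hH]
      have hbdd := Stmt19Aux.stp_bddAbove (G := G) ha2
      have hmem := Nat.sSup_mem ⟨0, Set.mem_setOf_eq ▸ Stmt19Aux.STP.zero G⟩ hbdd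
      have h1le : 1 ≤ sSup {n | Stmt19Aux.STP G n} := le_csSup hbdd (Stmt19Aux.STP.one hG)
      obtain ⟨k, hk⟩ : ∃ k, sSup {n | Stmt19Aux.STP G n} = k + 1 :=
        ⟨sSup {n | Stmt19Aux.STP G n} - 1, by omega⟩
      have hstp : Stmt19Aux.STP G (k + 1) := by rw [← hk]; exact hmem
      haveI : Subsingleton β := Fintype.card_le_one_iff_subsingleton.mp hb1
      have hprod : Stmt19Aux.STP (G □ H) (k + 1) := Stmt19Aux.stp_box_right G H hstp
      have hbddP : BddAbove {n | Stmt19Aux.STP (G □ H) n} := by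
        apply Stmt19Aux.stp_bddAbove
        rw [Fintype.card_prod]
        calc 2 ≤ Fintype.card α := ha2
          _ = Fintype.card α * 1 := (mul_one _).symm
          _ ≤ Fintype.card α * Fintype.card β := Nat.mul_le_mul_left _ hcb
      have hfin : k + 1 ≤ sSup {n | Stmt19Aux.STP (G □ H) n} := le_csSup hbddP hprod
      rw [hk]
      omega
    · have hb2 : 2 ≤ Fintype.card β := by omega
      have hbddG := Stmt19Aux.stp_bddAbove (G := G) ha2
      have hbddH := Stmt19Aux.stp_bddAbove (G := H) hb2
      have hmemG := Nat.sSup_mem ⟨0, Set.mem_setOf_eq ▸ Stmt19Aux.STP.zero G⟩ hbddG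
      have hmemH := Nat.sSup_mem ⟨0, Set.mem_setOf_eq ▸ Stmt19Aux.STP.zero H⟩ hbddH
      have h1leG : 1 ≤ sSup {n | Stmt19Aux.STP G n} := le_csSup hbddG (Stmt19Aux.STP.one hG)
      have h1leH : 1 ≤ sSup {n | Stmt19Aux.STP H n} := le_csSup hbddH (Stmt19Aux.STP.one hH)
      obtain ⟨k, hk⟩ : ∃ k, sSup {n | Stmt19Aux.STP G n} = k + 1 :=
        ⟨sSup {n | Stmt19Aux.STP G n} - 1, by omega⟩
      obtain ⟨l, hl⟩ : ∃ l, sSup {n | Stmt19Aux.STP H n} = l + 1 :=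
        ⟨sSup {n | Stmt19Aux.STP H n} - 1, by omega⟩
      have hstpG : Stmt19Aux.STP G (k + 1) := by rw [← hk]; exact hmemG
      have hstpH : Stmt19Aux.STP H (l + 1) := by rw [← hl]; exact hmemH
      have hcountG : 2 * (k + 1) ≤ Fintype.card α := Stmt19Aux.stp_two_mul_le ha2 hstpG
      have hcountH : 2 * (l + 1) ≤ Fintype.card β := Stmt19Aux.stp_two_mul_le hb2 hstpH
      have hprod : Stmt19Aux.STP (G □ H) (k + l + 1) :=
        Stmt19Aux.stp_box hstpG hstpH (by omega) (by omega)
      have hbddP : BddAbove {n | Stmt19Aux.STP (G □ H) n} := by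
        apply Stmt19Aux.stp_bddAbove
        rw [Fintype.card_prod]
        calc 2 ≤ Fintype.card β := hb2
          _ = 1 * Fintype.card β := (one_mul _).symm
          _ ≤ Fintype.card α * Fintype.card β := Nat.mul_le_mul_right _ hca
      have hfin : k + l + 1 ≤ sSup {n | Stmt19Aux.STP (G □ H) n} := le_csSup hbddP hprod
      rw [hk, hl]
      omega


theorem stmt19 {α β : Type*} [Fintype α] [Fintype β] (G : SimpleGraph α) (H : SimpleGraph β)
    (hG : G.Connected) (hH : H.Connected) :
    genKappa G (Fintype.card α) + genKappa H (Fintype.card β) - 1 ≤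
      genKappa (G □ H) (Fintype.card (α × β)) :=
  stmt19_aux G H hG hH
end
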